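/- arXiv:1510.07386 — 4 statements merged into one kernel-verified Lean document; each statement's English description precedes it below -/
import Mathlib

section
/- A point x* ∈ Ω_0 satisfies f(x*) ≤ f(y) for all y ∈ Ω_0 (i.e., x* is an optimal solution of the problem min_{x∈Ω_0} f(x)) if and only if there exist 𝐱* ∈ Ω and λ* ∈ ℝ^{nq} such that 𝐱* = 1_n ⊗ x*, L𝐱* = 0, and there exists g ∈ ∂𝐟(𝐱*) with P_{T_Ω(𝐱*)}(−g − αLλ*) = 0 (equivalently, −g − αLλ* ∈ N_Ω(𝐱*)). -/
open Matrix MeasureTheory Filter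

noncomputable section

variable {E : Type*} [NormedAddCommGroup E] [InnerProductSpace ℝ E]

/-- Subdifferential of a real-valued function. -/
def subdiff (h : E → ℝ) (x : E) : Set E :=
  {g | ∀ y, h x + (inner ℝ g (y - x) : ℝ) ≤ h y}

/-- Normal cone of a set `K` at `x`. -/
def normalCone (K : Set E) (x : E) : Set E :=
  {d | ∀ y ∈ K, (inner ℝ d (y - x) : ℝ) ≤ 0}

/-- Tangent cone of a set `K` at `x`. -/
def tangentCone (K : Set E) (x : E) : Set E :=
  closure {d | ∃ t : ℝ, 0 < t ∧ x + t • d ∈ K}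

/-- `p` is the metric projection of `u` onto `K`. -/
def IsProjOn (K : Set E) (u p : E) : Prop :=
  p ∈ K ∧ ∀ v ∈ K, ‖u - p‖ ≤ ‖u - v‖

/-- Local absolute continuity on `[0, ∞)`. -/
def LocAC {F : Type*} [NormedAddCommGroup F] [NormedSpace ℝ F] [CompleteSpace F]
    (φ : ℝ → F) : Prop :=
  (∀ᵐ t ∂(volume.restrict (Set.Ici (0:ℝ))), DifferentiableAt ℝ φ t) ∧
  LocallyIntegrableOn (deriv φ) (Set.Ici 0) volume ∧
  ∀ s t : ℝ, 0 ≤ s → s ≤ t → φ t - φ s = ∫ τ in s..t, deriv φ τ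

/-- Weighted Laplacian matrix. -/
def lap (n : ℕ) (a : Fin n → Fin n → ℝ) : Matrix (Fin n) (Fin n) ℝ :=
  Matrix.of fun i j => if i = j then ∑ k ∈ Finset.univ.erase i, a i k else - a i j

/-- `L = Lₙ ⊗ I_q`. -/
def bigL (n q : ℕ) (a : Fin n → Fin n → ℝ) :
    Matrix (Fin n × Fin q) (Fin n × Fin q) ℝ :=
  Matrix.kroneckerMap (· * ·) (lap n a) (1 : Matrix (Fin q) (Fin q) ℝ)

/-- `L` as a linear map on Euclidean space. -/
def Lmap (n q : ℕ) (a : Fin n → Fin n → ℝ) :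
    EuclideanSpace ℝ (Fin n × Fin q) →ₗ[ℝ] EuclideanSpace ℝ (Fin n × Fin q) :=
  Matrix.toEuclideanLin (bigL n q a)

/-- `i`-th block of a stacked vector. -/
def blk {n q : ℕ} (x : EuclideanSpace ℝ (Fin n × Fin q)) (i : Fin n) :
    EuclideanSpace ℝ (Fin q) := WithLp.toLp 2 (fun j => x (i, j))

/-- The product constraint set `Ω = Ω₁ × ⋯ × Ωₙ`. -/
def prodSet (n q : ℕ) (Ω : Fin n → Set (EuclideanSpace ℝ (Fin q))) :
    Set (EuclideanSpace ℝ (Fin n × Fin q)) :=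
  {x | ∀ i, blk x i ∈ Ω i}

/-- `𝐟(𝐱) = ∑ᵢ fⁱ(xᵢ)`. -/
def bigF (n q : ℕ) (f : Fin n → EuclideanSpace ℝ (Fin q) → ℝ)
    (x : EuclideanSpace ℝ (Fin n × Fin q)) : ℝ :=
  ∑ i, f i (blk x i)

/-- `1ₙ ⊗ v`. -/
def oneTensor (n q : ℕ) (v : EuclideanSpace ℝ (Fin q)) :
    EuclideanSpace ℝ (Fin n × Fin q) := WithLp.toLp 2 (fun p : Fin n × Fin q => v p.2)



local notation "⟪" x ", " y "⟫" => @inner ℝ _ _ x y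

section AuxConvex

lemma functional_split [CompleteSpace E] (φ : (E × ℝ) →L[ℝ] ℝ) :
    ∃ w : E, ∃ c : ℝ, ∀ y t, φ (y, t) = ⟪w, y⟫ + t * c := by
  refine ⟨(InnerProductSpace.toDual ℝ E).symm (φ.comp (ContinuousLinearMap.inl ℝ E ℝ)),
    φ (0, 1), fun y t => ?_⟩
  rw [InnerProductSpace.toDual_symm_apply]
  have h : (y, t) = (y, 0) + t • ((0:E), (1:ℝ)) := by simp [Prod.ext_iff]
  rw [h, map_add, _root_.map_smul]
  simp [ContinuousLinearMap.comp_apply, ContinuousLinearMap.inl_apply, smul_eq_mul]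

lemma le_on_of_le_on_interior {h : E → ℝ} (hh : Continuous h) {A : Set E} (hA : Convex ℝ A)
    {z : E} (hz : z ∈ interior A) {s : ℝ} (hle : ∀ y ∈ interior A, h y ≤ s)
    {y : E} (hy : y ∈ A) : h y ≤ s := by
  have hu : ∀ k : ℕ, y + (1/(k+1) : ℝ) • (z - y) ∈ interior A := by
    intro k
    refine hA.add_smul_sub_mem_interior hy hz ⟨by positivity, ?_⟩
    rw [div_le_one (by positivity)]
    have : (0:ℝ) ≤ (k:ℝ) := Nat.cast_nonneg k
    linarith
  have h0 : Filter.Tendsto (fun k : ℕ => (1/((k:ℝ)+1))) Filter.atTop (nhds 0) :=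
    tendsto_one_div_add_atTop_nhds_zero_nat
  have hterm : Filter.Tendsto (fun k : ℕ => y + (1/((k:ℝ)+1)) • (z-y)) Filter.atTop (nhds y) := by
    have := (h0.smul_const (z - y)).const_add y
    simpa using this
  exact le_of_tendsto ((hh.tendsto y).comp hterm) (Filter.Eventually.of_forall fun k => hle _ (hu k))

/-- Lemma A: minimizer over a convex set has a subgradient in the (negative) normal cone. -/
lemma exists_subgrad_of_isMinOn [CompleteSpace E] {f : E → ℝ}
    (hf : ConvexOn ℝ Set.univ f) (hc : Continuous f)
    {K : Set E} (hK : Convex ℝ K) {x : E} (hx : x ∈ K)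
    (hmin : ∀ y ∈ K, f x ≤ f y) :
    ∃ p ∈ subdiff f x, ∀ y ∈ K, 0 ≤ ⟪p, y - x⟫ := by
  set A : Set (E × ℝ) := {p | f p.1 < p.2} with hA
  have hAo : IsOpen A := isOpen_lt (hc.comp continuous_fst) continuous_snd
  have hAc : Convex ℝ A := by
    rintro ⟨y₁,t₁⟩ h1 ⟨y₂,t₂⟩ h2 a b ha hb hab
    simp only [hA, Set.mem_setOf_eq] at h1 h2 ⊢
    have hcv := hf.2 (Set.mem_univ y₁) (Set.mem_univ y₂) ha hb hab
    rcases eq_or_lt_of_le ha with rfl | ha'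
    · have hb1 : b = 1 := by linarith
      simpa [hb1] using lt_of_le_of_lt hcv (by simpa [hb1] using h2)
    · have h1' : a * f y₁ < a * t₁ := by exact mul_lt_mul_of_pos_left h1 ha'
      have h2' : b * f y₂ ≤ b * t₂ := mul_le_mul_of_nonneg_left h2.le hb
      calc f (a • y₁ + b • y₂) ≤ a * f y₁ + b * f y₂ := hcv
        _ < a * t₁ + b * t₂ := by linarith
  have hBc : Convex ℝ (K ×ˢ ({f x} : Set ℝ)) := hK.prod (convex_singleton _)
  have hdisj : Disjoint A (K ×ˢ ({f x} : Set ℝ)) := by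
    rw [Set.disjoint_left]
    rintro ⟨y,t⟩ hyA ⟨hyK, ht⟩
    simp only [hA, Set.mem_setOf_eq] at hyA
    simp only [Set.mem_singleton_iff] at ht
    exact absurd (hmin y hyK) (by rw [← ht]; linarith)
  obtain ⟨φ, s, hφA, hφB⟩ := geometric_hahn_banach_open hAc hAo hBc hdisj
  obtain ⟨w, c, hφ⟩ := functional_split φ
  have hAlt : ∀ y : E, ∀ t : ℝ, f y < t → ⟪w, y⟫ + t * c < s := by
    intro y t ht
    have := hφA (y, t) ht
    rwa [hφ] at this
  have hBge : ∀ y ∈ K, s ≤ ⟪w, y⟫ + f x * c := by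
    intro y hy
    have := hφB (y, f x) ⟨hy, rfl⟩
    rwa [hφ] at this
  -- c < 0
  have hc0 : c < 0 := by
    rcases lt_trichotomy c 0 with h | h | h
    · exact h
    · exfalso
      -- c = 0 : ⟪w,y⟫ < s for all y, s ≤ ⟪w,x⟫
      have hwy : ∀ y : E, ⟪w, y⟫ < s := fun y => by
        have := hAlt y (f y + 1) (by linarith)
        simpa [h] using this
      have hsx : s ≤ ⟪w, x⟫ := by have := hBge x hx; simpa [h] using this
      exact absurd (hwy x) (not_lt.2 hsx)
    · exfalso
      have hkey := hAlt x (max (f x + 1) ((s - ⟪w, x⟫)/c + 1)) (lt_of_lt_of_le (by linarith) (le_max_left _ _))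
      have h2 : (s - ⟪w, x⟫)/c + 1 ≤ max (f x + 1) ((s - ⟪w, x⟫)/c + 1) := le_max_right _ _
      have hMc := mul_le_mul_of_nonneg_right h2 h.le
      rw [add_mul, div_mul_cancel₀ _ h.ne'] at hMc
      linarith
  -- limit: ∀ y, ⟪w,y⟫ + f y * c ≤ s
  have hAle : ∀ y : E, ⟪w, y⟫ + f y * c ≤ s := by
    intro y
    refine le_of_forall_pos_le_add fun ε hε => ?_
    have hpos : (0:ℝ) < -c := by linarith
    have hlt := hAlt y (f y + ε/(-c)) (lt_add_of_pos_right _ (by positivity))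
    have hde : (f y + ε/(-c)) * c = f y * c - ε := by
      rw [add_mul, div_neg, neg_mul, div_mul_cancel₀ _ hc0.ne]; ring
    rw [hde] at hlt
    linarith
  have hseq : s = ⟪w, x⟫ + f x * c := le_antisymm (hBge x hx) (hAle x)
  refine ⟨(-c)⁻¹ • w, fun y => ?_, fun y hy => ?_⟩
  · have h1 := hAle y
    have h2 : ⟪(-c)⁻¹ • w, y - x⟫ = (-c)⁻¹ * (⟪w, y⟫ - ⟪w, x⟫) := by
      rw [real_inner_smul_left, inner_sub_right]
    rw [h2]
    rw [hseq] at h1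
    have hpos : (0:ℝ) < -c := by linarith
    have key : ⟪w, y⟫ - ⟪w, x⟫ ≤ (f y - f x) * (-c) := by nlinarith
    have hmul := mul_le_mul_of_nonneg_left key (inv_nonneg.2 hpos.le)
    have hinv : (-c)⁻¹ * ((f y - f x) * (-c)) = f y - f x := by field_simp [hc0.ne]
    linarith
  · have h1 := hBge y hy
    rw [hseq] at h1
    have h2 : ⟪(-c)⁻¹ • w, y - x⟫ = (-c)⁻¹ * (⟪w, y⟫ - ⟪w, x⟫) := by
      rw [real_inner_smul_left, inner_sub_right]
    rw [h2]
    have hpos : (0:ℝ) < -c := by linarith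
    have : 0 ≤ ⟪w, y⟫ - ⟪w, x⟫ := by linarith
    positivity

lemma strictEpi_convex {g : E → ℝ} (hg : ConvexOn ℝ Set.univ g) :
    Convex ℝ {r : E × ℝ | g r.1 < r.2} := by
  rintro ⟨y₁,t₁⟩ h1 ⟨y₂,t₂⟩ h2 a b ha hb hab
  simp only [Set.mem_setOf_eq, Prod.smul_mk, Prod.mk_add_mk, smul_eq_mul] at *
  have hcv := hg.2 (Set.mem_univ y₁) (Set.mem_univ y₂) ha hb hab
  rcases eq_or_lt_of_le ha with rfl | ha'
  · have hb1 : b = 1 := by linarith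
    simp only [hb1, zero_smul, smul_eq_mul, zero_add, zero_mul, one_smul, one_mul] at hcv ⊢
    linarith
  · have h1' := mul_lt_mul_of_pos_left h1 ha'
    have h2' := mul_le_mul_of_nonneg_left h2.le hb
    have := hcv
    simp only [smul_eq_mul] at this ⊢
    linarith

lemma hypo_convex {g : E → ℝ} (hg : ConcaveOn ℝ Set.univ g) :
    Convex ℝ {r : E × ℝ | r.2 ≤ g r.1} := by
  rintro ⟨y₁,t₁⟩ h1 ⟨y₂,t₂⟩ h2 a b ha hb hab
  simp only [Set.mem_setOf_eq, Prod.smul_mk, Prod.mk_add_mk, smul_eq_mul] at *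
  have hcv := hg.2 (Set.mem_univ y₁) (Set.mem_univ y₂) ha hb hab
  simp only [smul_eq_mul] at hcv
  have h1' := mul_le_mul_of_nonneg_left h1 ha
  have h2' := mul_le_mul_of_nonneg_left h2 hb
  linarith

lemma concave_aux {f₂ : E → ℝ} (hf₂ : ConvexOn ℝ Set.univ f₂) (C : ℝ) (p x : E) :
    ConcaveOn ℝ Set.univ (fun y => C - f₂ y + ⟪p, y - x⟫) := by
  refine ⟨convex_univ, fun y₁ _ y₂ _ a b ha hb hab => ?_⟩
  have hcv := hf₂.2 (Set.mem_univ y₁) (Set.mem_univ y₂) ha hb hab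
  have hin : (⟪p, a • y₁ + b • y₂⟫ : ℝ) = a * ⟪p, y₁⟫ + b * ⟪p, y₂⟫ := by
    rw [inner_add_right, real_inner_smul_right, real_inner_smul_right]
  have hC : a * C + b * C = C := by rw [← add_mul, hab, one_mul]
  have hpx : a * ⟪p, x⟫ + b * ⟪p, x⟫ = ⟪p, x⟫ := by rw [← add_mul, hab, one_mul]
  simp only [smul_eq_mul, inner_sub_right] at hcv ⊢
  rw [hin]
  linarith [hcv]

/-- Lemma B : subdifferential sum rule for two convex continuous functions. -/
lemma subdiff_add_split [CompleteSpace E] {f₁ f₂ : E → ℝ}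
    (hf₁ : ConvexOn ℝ Set.univ f₁) (hc₁ : Continuous f₁)
    (hf₂ : ConvexOn ℝ Set.univ f₂) {x p : E}
    (hp : p ∈ subdiff (fun y => f₁ y + f₂ y) x) :
    ∃ p₁ ∈ subdiff f₁ x, ∃ p₂ ∈ subdiff f₂ x, p = p₁ + p₂ := by
  have hg₁ : ConvexOn ℝ Set.univ (fun y => f₁ y - f₁ x) :=
    hf₁.sub (concaveOn_const _ convex_univ)
  set A : Set (E × ℝ) := {r | f₁ r.1 - f₁ x < r.2} with hA
  set B : Set (E × ℝ) := {r | r.2 ≤ f₂ x - f₂ r.1 + ⟪p, r.1 - x⟫} with hB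
  have hAo : IsOpen A := isOpen_lt ((hc₁.comp continuous_fst).sub continuous_const) continuous_snd
  have hAc : Convex ℝ A := strictEpi_convex hg₁
  have hBc : Convex ℝ B := hypo_convex (concave_aux hf₂ (f₂ x) p x)
  have hpy : ∀ y, f₁ x + f₂ x + ⟪p, y - x⟫ ≤ f₁ y + f₂ y := fun y => by
    have := hp y; simpa using this
  have hdisj : Disjoint A B := by
    rw [Set.disjoint_left]
    rintro ⟨y,t⟩ h1 h2
    simp only [hA, hB, Set.mem_setOf_eq] at h1 h2
    have := hpy y
    linarith
  obtain ⟨φ, s, hφA, hφB⟩ := geometric_hahn_banach_open hAc hAo hBc hdisj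
  obtain ⟨w, c, hφ⟩ := functional_split φ
  have hAlt : ∀ y : E, ∀ t : ℝ, f₁ y - f₁ x < t → ⟪w, y⟫ + t * c < s := by
    intro y t ht; have := hφA (y, t) ht; rwa [hφ] at this
  have hBge : ∀ y : E, ∀ t : ℝ, t ≤ f₂ x - f₂ y + ⟪p, y - x⟫ → s ≤ ⟪w, y⟫ + t * c := by
    intro y t ht; have := hφB (y, t) ht; rwa [hφ] at this
  have hc0 : c < 0 := by
    rcases lt_trichotomy c 0 with h | h | h
    · exact h
    · exfalso
      have h1 : ⟪w, x⟫ < s := by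
        have := hAlt x 1 (by linarith); simpa [h] using this
      have h2 : s ≤ ⟪w, x⟫ := by
        have := hBge x 0 (by simp); simpa [h] using this
      linarith
    · exfalso
      have hkey := hAlt x (max 1 ((s - ⟪w, x⟫)/c + 1)) (lt_of_lt_of_le (by linarith) (le_max_left _ _))
      have h2 : (s - ⟪w, x⟫)/c + 1 ≤ max 1 ((s - ⟪w, x⟫)/c + 1) := le_max_right _ _
      have hMc := mul_le_mul_of_nonneg_right h2 h.le
      rw [add_mul, div_mul_cancel₀ _ h.ne'] at hMc
      linarith
  have hpos : (0:ℝ) < -c := by linarith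
  have hAle : ∀ y : E, ⟪w, y⟫ + (f₁ y - f₁ x) * c ≤ s := by
    intro y
    refine le_of_forall_pos_le_add fun ε hε => ?_
    have hlt := hAlt y (f₁ y - f₁ x + ε/(-c)) (lt_add_of_pos_right _ (by positivity))
    have hde : (f₁ y - f₁ x + ε/(-c)) * c = (f₁ y - f₁ x) * c - ε := by
      rw [add_mul, div_neg, neg_mul, div_mul_cancel₀ _ hc0.ne]; ring
    rw [hde] at hlt
    linarith
  have hBge' : ∀ y : E, s ≤ ⟪w, y⟫ + (f₂ x - f₂ y + ⟪p, y - x⟫) * c := fun y =>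
    hBge y _ le_rfl
  have hsx1 : ⟪w, x⟫ ≤ s := by have := hAle x; simpa using this
  have hsx2 : s ≤ ⟪w, x⟫ := by have := hBge' x; simpa using this
  have hseq : s = ⟪w, x⟫ := le_antisymm hsx2 hsx1
  set p₁ : E := (-c)⁻¹ • w with hp₁
  have hip : ∀ y : E, ⟪p₁, y - x⟫ = (-c)⁻¹ * (⟪w, y⟫ - ⟪w, x⟫) := fun y => by
    rw [hp₁, real_inner_smul_left, inner_sub_right]
  refine ⟨p₁, fun y => ?_, p - p₁, fun y => ?_, by abel⟩
  · have h1 := hAle y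
    rw [hseq] at h1
    have key : ⟪w, y⟫ - ⟪w, x⟫ ≤ (f₁ y - f₁ x) * (-c) := by nlinarith
    have hmul := mul_le_mul_of_nonneg_left key (inv_nonneg.2 hpos.le)
    have hinv : (-c)⁻¹ * ((f₁ y - f₁ x) * (-c)) = f₁ y - f₁ x := by
      field_simp [hc0.ne]
    rw [hinv] at hmul
    show f₁ x + ⟪p₁, y - x⟫ ≤ f₁ y
    rw [hip y]
    linarith
  · have h1 := hBge' y
    rw [hseq] at h1
    have key : (f₂ x - f₂ y + ⟪p, y - x⟫) * (-c) ≤ ⟪w, y⟫ - ⟪w, x⟫ := by nlinarith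
    have hmul := mul_le_mul_of_nonneg_left key (inv_nonneg.2 hpos.le)
    have hinv : (-c)⁻¹ * ((f₂ x - f₂ y + ⟪p, y - x⟫) * (-c)) = f₂ x - f₂ y + ⟪p, y - x⟫ := by
      field_simp [hc0.ne]
    rw [hinv] at hmul
    have hsub : (⟪p - p₁, y - x⟫ : ℝ) = ⟪p, y - x⟫ - ⟪p₁, y - x⟫ := inner_sub_left _ _ _
    show f₂ x + ⟪p - p₁, y - x⟫ ≤ f₂ y
    rw [hsub, hip y]
    linarith

/-- Lemma C : normal cone to an intersection splits (two sets). -/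
lemma normalCone_inter_split [CompleteSpace E] {A B : Set E}
    (hA : Convex ℝ A) (hB : Convex ℝ B)
    {x : E} (hxA : x ∈ A) (hxB : x ∈ B)
    {z : E} (hzA : z ∈ interior A) (hzB : z ∈ interior B)
    {d : E} (hd : d ∈ normalCone (A ∩ B) x) :
    ∃ dA ∈ normalCone A x, ∃ dB ∈ normalCone B x, d = dA + dB := by
  set C₁ : Set (E × ℝ) := {r | r.1 ∈ interior A ∧ r.2 < ⟪d, r.1 - x⟫} with hC₁
  set C₂ : Set (E × ℝ) := B ×ˢ Set.Ici (0:ℝ) with hC₂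
  have hC₁o : IsOpen C₁ := by
    refine IsOpen.inter (isOpen_interior.preimage continuous_fst) ?_
    exact isOpen_lt continuous_snd ((Continuous.inner continuous_const (continuous_fst.sub continuous_const)))
  have hC₁c : Convex ℝ C₁ := by
    rintro ⟨y₁,t₁⟩ ⟨hy₁, h1⟩ ⟨y₂,t₂⟩ ⟨hy₂, h2⟩ a b ha hb hab
    simp only [hC₁, Set.mem_setOf_eq, Prod.smul_mk, Prod.mk_add_mk, smul_eq_mul] at *
    constructor
    · exact hA.interior hy₁ hy₂ ha hb hab
    · have hin : (⟪d, (a • y₁ + b • y₂ : E) - x⟫ : ℝ) = a * ⟪d, y₁ - x⟫ + b * ⟪d, y₂ - x⟫ := by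
        have h1' : a * ⟪d, x⟫ + b * ⟪d, x⟫ = ⟪d, x⟫ := by rw [← add_mul, hab, one_mul]
        rw [inner_sub_right, inner_add_right, real_inner_smul_right, real_inner_smul_right]
        simp only [inner_sub_right]
        linarith
      show a * t₁ + b * t₂ < _
      rw [hin]
      rcases eq_or_lt_of_le ha with rfl | ha'
      · have hb1 : b = 1 := by linarith
        simp only [hb1, zero_mul, zero_add, one_mul]
        exact h2
      · have h2' := mul_le_mul_of_nonneg_left h2.le hb
        have h1' := mul_lt_mul_of_pos_left h1 ha'
        linarith
  have hC₂c : Convex ℝ C₂ := hB.prod (convex_Ici 0)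
  have hdisj : Disjoint C₁ C₂ := by
    rw [Set.disjoint_left]
    rintro ⟨y,t⟩ ⟨hyA, hlt⟩ ⟨hyB, ht⟩
    have : (⟪d, y - x⟫ : ℝ) ≤ 0 := hd y ⟨interior_subset hyA, hyB⟩
    simp only [Set.mem_Ici] at ht
    linarith
  obtain ⟨φ, s, hφ₁, hφ₂⟩ := geometric_hahn_banach_open hC₁c hC₁o hC₂c hdisj
  obtain ⟨w, c, hφ⟩ := functional_split φ
  have h₁ : ∀ y ∈ interior A, ∀ t : ℝ, t < ⟪d, y - x⟫ → ⟪w, y⟫ + t * c < s := by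
    intro y hy t ht; have := hφ₁ (y, t) ⟨hy, ht⟩; rwa [hφ] at this
  have h₂ : ∀ y ∈ B, ∀ t : ℝ, 0 ≤ t → s ≤ ⟪w, y⟫ + t * c := by
    intro y hy t ht; have := hφ₂ (y, t) ⟨hy, ht⟩; rwa [hφ] at this
  -- c > 0
  have hc0 : 0 < c := by
    rcases lt_trichotomy c 0 with h | h | h
    · exfalso
      -- t → -∞ in C₁ violates upper bound
      have hkey := h₁ z hzA (min (⟪d, z - x⟫ - 1) ((s - ⟪w, z⟫)/c - 1))
        (lt_of_le_of_lt (min_le_left _ _) (by linarith))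
      have h2 : min (⟪d, z - x⟫ - 1) ((s - ⟪w, z⟫)/c - 1) ≤ (s - ⟪w, z⟫)/c - 1 := min_le_right _ _
      have hMc := mul_le_mul_of_nonpos_right h2 h.le
      rw [sub_mul, div_mul_cancel₀ _ h.ne] at hMc
      linarith
    · exfalso
      have h1' : ⟪w, z⟫ < s := by
        have := h₁ z hzA (⟪d, z - x⟫ - 1) (by linarith); simpa [h] using this
      have h2' : s ≤ ⟪w, z⟫ := by
        have := h₂ z (interior_subset hzB) 0 le_rfl; simpa [h] using this
      linarith
    · exact h
  -- from C₁ : ∀ y ∈ interior A, ⟪w,y⟫ + ⟪d,y-x⟫ * c ≤ s ; extend to A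
  have hintA : ∀ y ∈ interior A, ⟪w, y⟫ + ⟪d, y - x⟫ * c ≤ s := by
    intro y hy
    refine le_of_forall_pos_le_add fun ε hε => ?_
    have hεc : 0 < ε/c := by positivity
    have hlt := h₁ y hy (⟪d, y - x⟫ - ε/c) (by linarith)
    have hde : (⟪d, y - x⟫ - ε/c) * c = ⟪d, y - x⟫ * c - ε := by field_simp
    rw [hde] at hlt
    linarith
  have hallA : ∀ y ∈ A, ⟪w, y⟫ + ⟪d, y - x⟫ * c ≤ s := by
    intro y hy
    refine le_on_of_le_on_interior ?_ hA hzA hintA hy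
    exact (Continuous.inner continuous_const continuous_id).add
      (((Continuous.inner continuous_const (continuous_id.sub continuous_const))).mul continuous_const)
  have hallB : ∀ y ∈ B, s ≤ ⟪w, y⟫ := by
    intro y hy; have := h₂ y hy 0 le_rfl; simpa using this
  have hsx1 : ⟪w, x⟫ ≤ s := by have := hallA x hxA; simpa using this
  have hseq : s = ⟪w, x⟫ := le_antisymm (hallB x hxB) hsx1
  refine ⟨d + c⁻¹ • w, fun y hy => ?_, -(c⁻¹ • w), fun y hy => ?_, by abel⟩
  · have h1 := hallA y hy
    rw [hseq] at h1
    have : (⟪d + c⁻¹ • w, y - x⟫ : ℝ) = ⟪d, y - x⟫ + c⁻¹ * (⟪w, y⟫ - ⟪w, x⟫) := by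
      simp [inner_add_left, real_inner_smul_left, inner_sub_right]; ring
    rw [this]
    have key : ⟪d, y - x⟫ * c ≤ ⟪w, x⟫ - ⟪w, y⟫ := by linarith
    have hmul := mul_le_mul_of_nonneg_left key (inv_nonneg.2 hc0.le)
    have hinv : c⁻¹ * (⟪d, y - x⟫ * c) = ⟪d, y - x⟫ := by field_simp
    rw [hinv] at hmul
    linarith
  · have h1 := hallB y hy
    rw [hseq] at h1
    have : (⟪-(c⁻¹ • w), y - x⟫ : ℝ) = -(c⁻¹ * (⟪w, y⟫ - ⟪w, x⟫)) := by
      simp [inner_neg_left, real_inner_smul_left, inner_sub_right]; ring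
    rw [this]
    have : 0 ≤ c⁻¹ * (⟪w, y⟫ - ⟪w, x⟫) := by
      have : 0 ≤ ⟪w, y⟫ - ⟪w, x⟫ := by linarith
      positivity
    linarith

lemma eq_zero_of_inner_le {p x : E} (h : ∀ y : E, ⟪p, y - x⟫ ≤ 0) : p = 0 := by
  have := h (x + p)
  simp only [add_sub_cancel_left] at this
  exact inner_self_eq_zero.1 (le_antisymm this real_inner_self_nonneg)

lemma convexOn_finset_sum {ι : Type*} [DecidableEq ι] (s : Finset ι) (f : ι → E → ℝ)
    (hf : ∀ i, ConvexOn ℝ Set.univ (f i)) :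
    ConvexOn ℝ Set.univ (fun y => ∑ i ∈ s, f i y) := by
  induction s using Finset.induction_on with
  | empty => simpa using convexOn_const (0:ℝ) convex_univ
  | @insert i t hnot ih =>
    simp only [Finset.sum_insert hnot]
    exact (hf i).add ih

lemma mem_interior_biInter {ι : Type*} [DecidableEq ι] {s : Finset ι} {Ω : ι → Set E} {z : E}
    (hz : ∀ i ∈ s, z ∈ interior (Ω i)) : z ∈ interior (⋂ i ∈ s, Ω i) := by
  induction s using Finset.induction_on with
  | empty => simp
  | @insert i t hnot ih =>
    rw [Finset.set_biInter_insert, interior_inter]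
    exact ⟨hz i (Finset.mem_insert_self i t),
      ih fun j hj => hz j (Finset.mem_insert_of_mem hj)⟩

lemma subdiff_sum_split [CompleteSpace E] {ι : Type*} [DecidableEq ι] (s : Finset ι)
    (f : ι → E → ℝ) (hf : ∀ i, ConvexOn ℝ Set.univ (f i)) (hc : ∀ i, Continuous (f i))
    (x : E) : ∀ p, p ∈ subdiff (fun y => ∑ i ∈ s, f i y) x →
    ∃ g : ι → E, (∀ i ∈ s, g i ∈ subdiff (f i) x) ∧ ∑ i ∈ s, g i = p := by
  induction s using Finset.induction_on with
  | empty =>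
    intro p hp
    simp only [Finset.sum_empty] at hp
    have hp0 : p = 0 := eq_zero_of_inner_le fun y => by have := hp y; simpa using this
    exact ⟨fun _ => 0, by simp, by simp [hp0]⟩
  | @insert i s' hnot ih =>
    intro p hp
    simp only [Finset.sum_insert hnot] at hp
    obtain ⟨p₁, hp₁, p₂, hp₂, rfl⟩ := subdiff_add_split (hf i) (hc i)
      (convexOn_finset_sum s' f hf) hp
    obtain ⟨g, hg, hgsum⟩ := ih p₂ hp₂
    refine ⟨Function.update g i p₁, fun j hj => ?_, ?_⟩
    · rcases Finset.mem_insert.1 hj with rfl | hj'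
      · simpa using hp₁
      · rw [Function.update_of_ne (by rintro rfl; exact hnot hj') _ _]
        exact hg j hj'
    · have hcs : ∑ j ∈ s', Function.update g i p₁ j = ∑ j ∈ s', g j :=
        Finset.sum_congr rfl fun j hj => Function.update_of_ne (by rintro rfl; exact hnot hj) _ _
      rw [Finset.sum_insert hnot, Function.update_self, hcs, hgsum]

lemma normalCone_iInter_split [CompleteSpace E] {ι : Type*} [DecidableEq ι] (s : Finset ι)
    (Ω : ι → Set E) (hcv : ∀ i, Convex ℝ (Ω i))
    {z : E} (hz : ∀ i ∈ s, z ∈ interior (Ω i)) {x : E} (hx : ∀ i ∈ s, x ∈ Ω i) :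
    ∀ d, d ∈ normalCone (⋂ i ∈ s, Ω i) x →
    ∃ dv : ι → E, (∀ i ∈ s, dv i ∈ normalCone (Ω i) x) ∧ ∑ i ∈ s, dv i = d := by
  induction s using Finset.induction_on with
  | empty =>
    intro d hd
    have huniv : (⋂ i ∈ (∅ : Finset ι), Ω i) = Set.univ := by simp
    rw [huniv] at hd
    have hd0 : d = 0 := eq_zero_of_inner_le fun y => hd y (by simp)
    exact ⟨fun _ => 0, by simp, by simp [hd0]⟩
  | @insert i s' hnot ih =>
    intro d hd
    rw [Finset.set_biInter_insert] at hd
    have hzs : z ∈ interior (⋂ j ∈ s', Ω j) :=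
      mem_interior_biInter fun j hj => hz j (Finset.mem_insert_of_mem hj)
    have hxs : x ∈ ⋂ j ∈ s', Ω j :=
      Set.mem_biInter fun j hj => hx j (Finset.mem_insert_of_mem hj)
    obtain ⟨dA, hdA, dB, hdB, rfl⟩ := normalCone_inter_split (hcv i)
      (convex_iInter₂ fun j _ => hcv j) (hx i (Finset.mem_insert_self i s')) hxs
      (hz i (Finset.mem_insert_self i s')) hzs hd
    obtain ⟨dv, hdv, hdvsum⟩ := ih (fun j hj => hz j (Finset.mem_insert_of_mem hj))
      (fun j hj => hx j (Finset.mem_insert_of_mem hj)) dB hdB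
    refine ⟨Function.update dv i dA, fun j hj => ?_, ?_⟩
    · rcases Finset.mem_insert.1 hj with rfl | hj'
      · simpa using hdA
      · rw [Function.update_of_ne (by rintro rfl; exact hnot hj') _ _]
        exact hdv j hj'
    · have hcs : ∑ j ∈ s', Function.update dv i dA j = ∑ j ∈ s', dv j :=
        Finset.sum_congr rfl fun j hj => Function.update_of_ne (by rintro rfl; exact hnot hj) _ _
      rw [Finset.sum_insert hnot, Function.update_self, hcs, hdvsum]

end AuxConvex

section AuxLap

lemma lap_rowsum (n : ℕ) (a : Fin n → Fin n → ℝ) (i : Fin n) :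
    ∑ k, lap n a i k = 0 := by
  rw [← Finset.add_sum_erase _ _ (Finset.mem_univ i)]
  have h1 : lap n a i i = ∑ k ∈ Finset.univ.erase i, a i k := by simp [lap]
  have h2 : ∑ k ∈ Finset.univ.erase i, lap n a i k
      = ∑ k ∈ Finset.univ.erase i, (- a i k) :=
    Finset.sum_congr rfl fun k hk => by
      simp [lap, (Finset.ne_of_mem_erase hk).symm]
  rw [h1, h2, Finset.sum_neg_distrib]
  ring

lemma lap_colsum (n : ℕ) (a : Fin n → Fin n → ℝ)
    (hsymm : ∀ i j, a i j = a j i) (k : Fin n) :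
    ∑ i, lap n a i k = 0 := by
  rw [← Finset.add_sum_erase _ _ (Finset.mem_univ k)]
  have h1 : lap n a k k = ∑ m ∈ Finset.univ.erase k, a k m := by simp [lap]
  have h2 : ∑ i ∈ Finset.univ.erase k, lap n a i k
      = ∑ i ∈ Finset.univ.erase k, (- a k i) :=
    Finset.sum_congr rfl fun i hi => by
      simp [lap, Finset.ne_of_mem_erase hi, hsymm i k]
  rw [h1, h2, Finset.sum_neg_distrib]
  ring

lemma lap_mulVec (n : ℕ) (a : Fin n → Fin n → ℝ)
    (w : Fin n → ℝ) (i : Fin n) :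
    (lap n a).mulVec w i = ∑ j, a i j * (w i - w j) := by
  have h0 : (lap n a).mulVec w i = ∑ j, lap n a i j * w j := by
    simp [Matrix.mulVec, dotProduct]
  rw [h0, ← Finset.add_sum_erase _ _ (Finset.mem_univ i)]
  have h1 : lap n a i i = ∑ k ∈ Finset.univ.erase i, a i k := by simp [lap]
  have h2 : ∑ j ∈ Finset.univ.erase i, lap n a i j * w j
      = ∑ j ∈ Finset.univ.erase i, -(a i j * w j) :=
    Finset.sum_congr rfl fun j hj => by
      simp [lap, (Finset.ne_of_mem_erase hj).symm]
  have h3 : ∑ j, a i j * (w i - w j)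
      = ∑ j ∈ Finset.univ.erase i, a i j * (w i - w j) :=
    (Finset.sum_erase _ (by simp)).symm
  rw [h1, Finset.sum_mul, h2, h3, Finset.sum_neg_distrib, ← sub_eq_add_neg,
    ← Finset.sum_sub_distrib]
  exact Finset.sum_congr rfl fun j _ => by ring

lemma lap_quad (n : ℕ) (a : Fin n → Fin n → ℝ) (hsymm : ∀ i j, a i j = a j i)
    (w : Fin n → ℝ) :
    2 * (∑ i, (lap n a).mulVec w i * w i) = ∑ i, ∑ j, a i j * (w i - w j)^2 := by
  have h1 : ∑ i, (lap n a).mulVec w i * w i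
      = ∑ i, ∑ j, a i j * (w i - w j) * w i := by
    refine Finset.sum_congr rfl fun i _ => ?_
    rw [lap_mulVec, Finset.sum_mul]
  have h2 : ∑ i, ∑ j, a i j * (w i - w j) * w i
      = ∑ i, ∑ j, a i j * (w j - w i) * w j := by
    rw [Finset.sum_comm]
    exact Finset.sum_congr rfl fun i _ => Finset.sum_congr rfl fun j _ => by
      rw [hsymm j i]
  rw [two_mul, h1]
  nth_rewrite 2 [h2]
  rw [← Finset.sum_add_distrib]
  refine Finset.sum_congr rfl fun i _ => ?_
  rw [← Finset.sum_add_distrib]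
  exact Finset.sum_congr rfl fun j _ => by ring

lemma walk_const {n : ℕ} {G : SimpleGraph (Fin n)} {w : Fin n → ℝ}
    (hadj : ∀ i j, G.Adj i j → w i = w j) {i j : Fin n} (p : G.Walk i j) :
    w i = w j := by
  induction p with
  | nil => rfl
  | cons h _ ih => exact (hadj _ _ h).trans ih

lemma lap_surj (n : ℕ) (hn : 0 < n) (a : Fin n → Fin n → ℝ)
    (hsymm : ∀ i j, a i j = a j i) (hnn : ∀ i j, 0 ≤ a i j)
    (hconn : (SimpleGraph.fromRel fun i j => 0 < a i j).Connected)
    (u : EuclideanSpace ℝ (Fin n)) (hu : ∑ i, u i = 0) :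
    ∃ μ : EuclideanSpace ℝ (Fin n), Matrix.toEuclideanLin (lap n a) μ = u := by
  set T := Matrix.toEuclideanLin (lap n a) with hT
  have hTapp : ∀ (x : EuclideanSpace ℝ (Fin n)) (i : Fin n),
      T x i = (lap n a).mulVec x i := by
    intro x i
    rw [hT, Matrix.toEuclideanLin_apply]
  set ones : EuclideanSpace ℝ (Fin n) := WithLp.toLp 2 (fun _ => 1) with hones
  have hker : (LinearMap.range T)ᗮ ≤ Submodule.span ℝ {ones} := by
    intro w hw
    have hw' : ∀ x, (⟪T x, w⟫ : ℝ) = 0 := fun x =>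
      (Submodule.mem_orthogonal _ w).1 hw (T x) (LinearMap.mem_range_self T x)
    have hq0 : ∑ i, (lap n a).mulVec w i * w i = 0 := by
      have := hw' w
      rw [PiLp.inner_apply] at this
      simp only [RCLike.inner_apply, starRingEnd_apply, star_trivial] at this
      rw [← this]
      exact Finset.sum_congr rfl fun i _ => by rw [hTapp w i, mul_comm]
    have hq : ∑ i, ∑ j, a i j * (w i - w j)^2 = 0 := by
      rw [← lap_quad n a hsymm w, hq0]; ring
    have hterm : ∀ i j, 0 < a i j → w i = w j := by
      intro i j hij
      have hnn' : ∀ p ∈ (Finset.univ ×ˢ Finset.univ : Finset (Fin n × Fin n)),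
          (0:ℝ) ≤ a p.1 p.2 * (w p.1 - w p.2)^2 := fun p _ =>
        mul_nonneg (hnn p.1 p.2) (sq_nonneg _)
      have hflat : ∑ p ∈ (Finset.univ ×ˢ Finset.univ : Finset (Fin n × Fin n)),
          a p.1 p.2 * (w p.1 - w p.2)^2 = 0 := by
        rw [Finset.sum_product]; exact hq
      have := (Finset.sum_eq_zero_iff_of_nonneg hnn').1 hflat (i, j) (by simp)
      have hsq : (w i - w j)^2 = 0 := by
        by_contra hne
        exact hne (by
          have := mul_eq_zero.1 this
          rcases this with h | h
          · exact absurd h hij.ne'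
          · exact h)
      have := sq_eq_zero_iff.1 hsq
      linarith
    have hconst : ∀ i j, w i = w j := by
      intro i j
      obtain ⟨p⟩ := hconn.preconnected i j
      refine walk_const (fun i' j' hadj => ?_) p
      rw [SimpleGraph.fromRel_adj] at hadj
      rcases hadj.2 with h | h
      · exact hterm i' j' h
      · exact (hterm j' i' h).symm
    rw [Submodule.mem_span_singleton]
    refine ⟨w ⟨0, hn⟩, ?_⟩
    ext i
    have : (w ⟨0, hn⟩ • ones) i = w ⟨0, hn⟩ := by
      simp [hones]
    rw [this]
    exact (hconst i ⟨0, hn⟩).symm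
  have horth : u ∈ (Submodule.span ℝ {ones})ᗮ := by
    rw [Submodule.mem_orthogonal]
    intro v hv
    rw [Submodule.mem_span_singleton] at hv
    obtain ⟨c, rfl⟩ := hv
    rw [real_inner_smul_left]
    have hiu : (⟪ones, u⟫ : ℝ) = ∑ i, u i := by
      rw [PiLp.inner_apply]
      simp [RCLike.inner_apply, hones]
    rw [hiu, hu, mul_zero]
  have hle : (Submodule.span ℝ {ones})ᗮ ≤ (LinearMap.range T)ᗮᗮ :=
    Submodule.orthogonal_le hker
  rw [Submodule.orthogonal_orthogonal] at hle
  exact hle horth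

lemma Lmap_apply (n q : ℕ) (a : Fin n → Fin n → ℝ)
    (x : EuclideanSpace ℝ (Fin n × Fin q)) (i : Fin n) (j : Fin q) :
    Lmap n q a x (i, j) = ∑ k, lap n a i k * x (k, j) := by
  rw [Lmap, Matrix.toEuclideanLin_apply]
  show (bigL n q a).mulVec (fun p => x p) (i, j) = _
  rw [show (bigL n q a).mulVec (fun p => x p) (i, j)
      = ∑ r : Fin n × Fin q, bigL n q a (i, j) r * x r by
    simp [Matrix.mulVec, dotProduct]]
  rw [Fintype.sum_prod_type]
  refine Finset.sum_congr rfl fun k _ => ?_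
  have : ∀ l : Fin q, bigL n q a (i, j) (k, l) * x (k, l)
      = (if j = l then lap n a i k * x (k, l) else 0) := by
    intro l
    by_cases h : j = l
    · simp [bigL, Matrix.kroneckerMap_apply, Matrix.one_apply, h]
    · simp [bigL, Matrix.kroneckerMap_apply, Matrix.one_apply, h]
  rw [Finset.sum_congr rfl fun l _ => this l]
  simp

lemma inner_blocks {n q : ℕ} (x y : EuclideanSpace ℝ (Fin n × Fin q)) :
    (⟪x, y⟫ : ℝ) = ∑ i, (⟪blk x i, blk y i⟫ : ℝ) := by
  rw [PiLp.inner_apply, Fintype.sum_prod_type]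
  refine Finset.sum_congr rfl fun i _ => ?_
  rw [PiLp.inner_apply]
  simp [blk]

lemma sum_euclidean_apply {n q : ℕ} (g : Fin n → EuclideanSpace ℝ (Fin q)) (j : Fin q) :
    (∑ i, g i) j = ∑ i, g i j := by
  induction (Finset.univ : Finset (Fin n)) using Finset.induction_on with
  | empty => simp
  | @insert i t hnot ih => rw [Finset.sum_insert hnot, Finset.sum_insert hnot, ← ih]; rfl

lemma Lmap_oneTensor (n q : ℕ) (a : Fin n → Fin n → ℝ) (v : EuclideanSpace ℝ (Fin q)) :
    Lmap n q a (oneTensor n q v) = 0 := by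
  ext p
  obtain ⟨i, j⟩ := p
  rw [Lmap_apply]
  have : ∀ k : Fin n, lap n a i k * (oneTensor n q v) (k, j) = lap n a i k * v j := fun k => rfl
  rw [Finset.sum_congr rfl fun k _ => this k, ← Finset.sum_mul, lap_rowsum, zero_mul]
  rfl

lemma inner_Lmap_oneTensor (n q : ℕ) (a : Fin n → Fin n → ℝ)
    (hsymm : ∀ i j, a i j = a j i)
    (lam : EuclideanSpace ℝ (Fin n × Fin q)) (w : EuclideanSpace ℝ (Fin q)) :
    (⟪Lmap n q a lam, oneTensor n q w⟫ : ℝ) = 0 := by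
  rw [PiLp.inner_apply, Fintype.sum_prod_type]
  have : ∀ i : Fin n, ∀ j : Fin q,
      (⟪(Lmap n q a lam) (i,j), (oneTensor n q w) (i,j)⟫ : ℝ)
        = (∑ k, lap n a i k * lam (k, j)) * w j := by
    intro i j
    rw [show (⟪(Lmap n q a lam) (i,j), (oneTensor n q w) (i,j)⟫ : ℝ)
        = (Lmap n q a lam) (i,j) * w j from by
      simp only [RCLike.inner_apply, starRingEnd_apply, star_trivial]
      exact mul_comm _ _]
    rw [Lmap_apply]
  calc ∑ i, ∑ j, (⟪(Lmap n q a lam) (i,j), (oneTensor n q w) (i,j)⟫ : ℝ)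
      = ∑ i, ∑ j, (∑ k, lap n a i k * lam (k, j)) * w j :=
        Finset.sum_congr rfl fun i _ => Finset.sum_congr rfl fun j _ => this i j
    _ = ∑ j, ∑ i, (∑ k, lap n a i k * lam (k, j)) * w j := Finset.sum_comm
    _ = ∑ j, (∑ k, (∑ i, lap n a i k) * lam (k, j)) * w j := by
        refine Finset.sum_congr rfl fun j _ => ?_
        rw [← Finset.sum_mul]
        congr 1
        rw [Finset.sum_comm]
        exact Finset.sum_congr rfl fun k _ => (Finset.sum_mul _ _ _).symm
    _ = 0 := by
        refine Finset.sum_eq_zero fun j _ => ?_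
        rw [Finset.sum_congr rfl fun k _ => by rw [lap_colsum n a hsymm k, zero_mul]]
        simp

lemma bigL_solve (n q : ℕ) (hn : 0 < n) (a : Fin n → Fin n → ℝ)
    (hsymm : ∀ i j, a i j = a j i) (hnn : ∀ i j, 0 ≤ a i j)
    (hconn : (SimpleGraph.fromRel fun i j => 0 < a i j).Connected)
    (v : EuclideanSpace ℝ (Fin n × Fin q)) (hv : ∀ j, ∑ i, v (i, j) = 0) :
    ∃ lam : EuclideanSpace ℝ (Fin n × Fin q), Lmap n q a lam = v := by
  have hcol : ∀ j : Fin q, ∃ μ : EuclideanSpace ℝ (Fin n),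
      Matrix.toEuclideanLin (lap n a) μ = WithLp.toLp 2 (fun i => v (i, j)) :=
    fun j => lap_surj n hn a hsymm hnn hconn (WithLp.toLp 2 (fun i => v (i, j))) (hv j)
  choose μ hμ using hcol
  refine ⟨WithLp.toLp 2 (fun p : Fin n × Fin q => μ p.2 p.1), ?_⟩
  ext p
  obtain ⟨i, j⟩ := p
  rw [Lmap_apply]
  have hμj : (Matrix.toEuclideanLin (lap n a)) (μ j) i = v (i, j) :=
    congrArg (fun z => z i) (hμ j)
  rw [show (Matrix.toEuclideanLin (lap n a)) (μ j) i
      = ∑ k, lap n a i k * μ j k from by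
    rw [Matrix.toEuclideanLin_apply]
    show (lap n a).mulVec (fun k => μ j k) i = _
    simp [Matrix.mulVec, dotProduct]] at hμj
  exact hμj

lemma isProjOn_zero_of_normal {K : Set E} {x u : E} (hx : x ∈ K)
    (hu : u ∈ normalCone K x) : IsProjOn (tangentCone K x) u 0 := by
  have hS : ∀ v ∈ {d : E | ∃ t : ℝ, 0 < t ∧ x + t • d ∈ K}, ⟪u, v⟫ ≤ 0 := by
    rintro v ⟨t, ht, hmem⟩
    have h1 : (⟪u, (x + t • v) - x⟫ : ℝ) ≤ 0 := hu _ hmem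
    rw [add_sub_cancel_left, real_inner_smul_right] at h1
    exact le_of_not_gt fun hpos => absurd h1 (not_le.2 (mul_pos ht hpos))
  have hT : ∀ v ∈ tangentCone K x, ⟪u, v⟫ ≤ 0 := by
    intro v hv
    have hcl : closure {d : E | ∃ t : ℝ, 0 < t ∧ x + t • d ∈ K}
        ⊆ {v : E | ⟪u, v⟫ ≤ 0} := by
      refine closure_minimal hS ?_
      exact isClosed_le (Continuous.inner continuous_const continuous_id) continuous_const
    exact hcl hv
  constructor
  · refine subset_closure ⟨1, one_pos, ?_⟩
    simpa using hx
  · intro v hv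
    have hiv := hT v hv
    have hsq : ‖u - 0‖^2 ≤ ‖u - v‖^2 := by
      rw [sub_zero, @norm_sub_sq_real]
      nlinarith [sq_nonneg ‖v‖]
    have hroot := Real.sqrt_le_sqrt hsq
    rwa [Real.sqrt_sq (norm_nonneg _), Real.sqrt_sq (norm_nonneg _)] at hroot

lemma inner_nonpos_of_isProjOn {K : Set E} {x u v : E}
    (hproj : IsProjOn (tangentCone K x) u 0)
    (hv : ∃ t : ℝ, 0 < t ∧ x + t • v ∈ K) : ⟪u, v⟫ ≤ 0 := by
  have hscale : ∀ s : ℝ, 0 < s → (s • v) ∈ tangentCone K x := by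
    intro s hs
    obtain ⟨t, ht, hmem⟩ := hv
    refine subset_closure ⟨t / s, by positivity, ?_⟩
    rw [smul_smul, div_mul_cancel₀ _ hs.ne']
    exact hmem
  have key : ∀ s : ℝ, 0 < s → 2 * s * ⟪u, v⟫ ≤ s^2 * ‖v‖^2 := by
    intro s hs
    have h1 := hproj.2 (s • v) (hscale s hs)
    rw [sub_zero] at h1
    have hsq : ‖u‖^2 ≤ ‖u - s • v‖^2 := by
      have := pow_le_pow_left₀ (norm_nonneg u) h1 2
      exact this
    rw [@norm_sub_sq_real, real_inner_smul_right, norm_smul, Real.norm_eq_abs,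
      abs_of_pos hs, mul_pow] at hsq
    nlinarith
  by_contra hlt
  push_neg at hlt
  by_cases hV : ‖v‖^2 = 0
  · have := key 1 one_pos
    rw [hV] at this
    linarith
  · have hVpos : 0 < ‖v‖^2 := lt_of_le_of_ne (sq_nonneg _) (Ne.symm hV)
    have hs : 0 < ⟪u, v⟫ / ‖v‖^2 := by positivity
    have hk := key _ hs
    rw [div_pow] at hk
    have hexp : ((⟪u, v⟫ : ℝ)^2 / (‖v‖^2)^2) * ‖v‖^2 = ⟪u, v⟫^2 / ‖v‖^2 := by
      field_simp
    rw [hexp] at hk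
    have h2 : 2 * ((⟪u, v⟫ : ℝ)/‖v‖^2) * ⟪u, v⟫ * ‖v‖^2 = 2 * ⟪u, v⟫ * ⟪u, v⟫ := by
      have h := div_mul_cancel₀ (⟪u, v⟫ : ℝ) hV
      calc _ = 2 * ⟪u, v⟫ * (⟪u, v⟫ / ‖v‖^2 * ‖v‖^2) := by ring
        _ = _ := by rw [h]
    have h3 := mul_le_mul_of_nonneg_right hk hVpos.le
    rw [h2, div_mul_cancel₀ _ hV] at h3
    nlinarith

end AuxLap

/-- optimality of x* for min over Ω₀ is equivalent to the
existence of 𝐱* = 1ₙ ⊗ x* and λ* satisfying the first-order conditions. -/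
theorem stmt0
    (n q : ℕ) (hn : 2 ≤ n) (hq : 1 ≤ q) (α : ℝ) (hα : 0 < α)
    (a : Fin n → Fin n → ℝ)
    (hsymm : ∀ i j, a i j = a j i) (hnn : ∀ i j, 0 ≤ a i j) (hdiag : ∀ i, a i i = 0)
    (hconn : (SimpleGraph.fromRel fun i j => 0 < a i j).Connected)
    (f : Fin n → EuclideanSpace ℝ (Fin q) → ℝ)
    (hfconv : ∀ i, ConvexOn ℝ Set.univ (f i)) (hfcont : ∀ i, Continuous (f i))
    (Ω : Fin n → Set (EuclideanSpace ℝ (Fin q)))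
    (hΩne : ∀ i, (Ω i).Nonempty) (hΩcl : ∀ i, IsClosed (Ω i)) (hΩcv : ∀ i, Convex ℝ (Ω i))
    (hint : (⋂ i, interior (Ω i)).Nonempty)
    (xstar : EuclideanSpace ℝ (Fin q)) (hxstar : xstar ∈ ⋂ i, Ω i) :
    (∀ y ∈ ⋂ i, Ω i, (∑ i, f i xstar) ≤ ∑ i, f i y) ↔
      ∃ (xbar lamstar : EuclideanSpace ℝ (Fin n × Fin q)),
        xbar ∈ prodSet n q Ω ∧ xbar = oneTensor n q xstar ∧
        Lmap n q a xbar = 0 ∧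
        ∃ g ∈ subdiff (bigF n q f) xbar,
          IsProjOn (tangentCone (prodSet n q Ω) xbar)
            (-g - α • Lmap n q a lamstar) 0 := by
  have hn0 : 0 < n := lt_of_lt_of_le two_pos hn
  have hxsΩ : ∀ i, xstar ∈ Ω i := by simpa [Set.mem_iInter] using hxstar
  constructor
  · -- forward direction
    intro hopt
    have hF : ConvexOn ℝ Set.univ (fun y => ∑ i, f i y) :=
      convexOn_finset_sum Finset.univ f hfconv
    have hFc : Continuous (fun y : EuclideanSpace ℝ (Fin q) => ∑ i, f i y) :=
      continuous_finset_sum _ fun i _ => (hfcont i)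
    have hK : Convex ℝ (⋂ i, Ω i) := convex_iInter fun i => hΩcv i
    obtain ⟨p, hpsub, hpnorm⟩ := exists_subgrad_of_isMinOn hF hFc hK hxstar hopt
    obtain ⟨gv, hgv, hgsum⟩ := subdiff_sum_split Finset.univ f hfconv hfcont xstar p hpsub
    obtain ⟨z, hz⟩ := hint
    have hzint : ∀ i, z ∈ interior (Ω i) := by simpa [Set.mem_iInter] using hz
    have hpneg : -p ∈ normalCone (⋂ i ∈ Finset.univ, Ω i) xstar := by
      intro y hy
      have hy' : y ∈ ⋂ i, Ω i := by simpa using hy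
      have := hpnorm y hy'
      rw [inner_neg_left]
      linarith
    obtain ⟨dv, hdv, hdsum⟩ := normalCone_iInter_split Finset.univ Ω hΩcv
      (fun i _ => hzint i) (fun i _ => hxsΩ i) (-p) hpneg
    set v : EuclideanSpace ℝ (Fin n × Fin q) :=
      WithLp.toLp 2 (fun pt : Fin n × Fin q => (-(gv pt.1 pt.2 + dv pt.1 pt.2)) / α) with hvdef
    have hv : ∀ j, ∑ i, v (i, j) = 0 := by
      intro j
      have hgj : ∑ i, gv i j = p j := by rw [← sum_euclidean_apply, hgsum]
      have hdj : ∑ i, dv i j = -(p j) := by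
        rw [← sum_euclidean_apply, hdsum]; rfl
      have : ∑ i, v (i, j) = (∑ i, (-(gv i j + dv i j))) / α := by
        rw [Finset.sum_div]
      rw [this, Finset.sum_neg_distrib, Finset.sum_add_distrib, hgj, hdj]
      simp
    obtain ⟨lam, hlam⟩ := bigL_solve n q hn0 a hsymm hnn hconn v hv
    refine ⟨oneTensor n q xstar, lam, fun i => hxsΩ i, rfl,
      Lmap_oneTensor n q a xstar, ?_⟩
    set G : EuclideanSpace ℝ (Fin n × Fin q) := WithLp.toLp 2 (fun pt : Fin n × Fin q => gv pt.1 pt.2) with hGdef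
    refine ⟨G, ?_, ?_⟩
    · -- G is a subgradient of bigF at oneTensor xstar
      intro y
      have hib : (⟪G, y - oneTensor n q xstar⟫ : ℝ)
          = ∑ i, (⟪gv i, blk y i - xstar⟫ : ℝ) := by
        rw [inner_blocks]
        rfl
      have hsum : ∀ i : Fin n,
          f i xstar + (⟪gv i, blk y i - xstar⟫ : ℝ) ≤ f i (blk y i) :=
        fun i => hgv i (Finset.mem_univ i) (blk y i)
      have hbF : bigF n q f (oneTensor n q xstar) = ∑ i, f i xstar := rfl
      have hbFy : bigF n q f y = ∑ i, f i (blk y i) := rfl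
      rw [hbF, hbFy, hib, ← Finset.sum_add_distrib]
      exact Finset.sum_le_sum fun i _ => hsum i
    · -- projection condition
      set D : EuclideanSpace ℝ (Fin n × Fin q) := WithLp.toLp 2 (fun pt : Fin n × Fin q => dv pt.1 pt.2) with hDdef
      have hu : -G - α • Lmap n q a lam = D := by
        ext pt
        show -(gv pt.1 pt.2) - α * (Lmap n q a lam pt) = dv pt.1 pt.2
        rw [hlam]
        show -(gv pt.1 pt.2) - α * ((-(gv pt.1 pt.2 + dv pt.1 pt.2)) / α) = dv pt.1 pt.2
        field_simp
        ring
      rw [hu]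
      refine isProjOn_zero_of_normal (fun i => hxsΩ i) ?_
      intro y hy
      have hib : (⟪D, y - oneTensor n q xstar⟫ : ℝ)
          = ∑ i, (⟪dv i, blk y i - xstar⟫ : ℝ) := by
        rw [inner_blocks]
        rfl
      rw [hib]
      exact Finset.sum_nonpos fun i _ => hdv i (Finset.mem_univ i) (blk y i) (hy i)
  · -- reverse direction
    rintro ⟨xbar, lam, hxΩ, hxeq, hLx, g, hg, hproj⟩ y hy
    subst hxeq
    have hyΩ : ∀ i, y ∈ Ω i := by simpa [Set.mem_iInter] using hy
    set w : EuclideanSpace ℝ (Fin n × Fin q) :=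
      oneTensor n q y - oneTensor n q xstar with hwdef
    have honew : oneTensor n q xstar + (1:ℝ) • w = oneTensor n q y := by
      rw [one_smul, hwdef]; abel
    have hvS : ∃ t : ℝ, 0 < t ∧ oneTensor n q xstar + t • w ∈ prodSet n q Ω :=
      ⟨1, one_pos, by rw [honew]; exact fun i => by simpa [blk, oneTensor] using hyΩ i⟩
    have huv := inner_nonpos_of_isProjOn hproj hvS
    have hwone : w = oneTensor n q (y - xstar) := by
        ext p; simp [hwdef, oneTensor]
    have hL0 : (⟪Lmap n q a lam, w⟫ : ℝ) = 0 := by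
      rw [hwone]; exact inner_Lmap_oneTensor n q a hsymm lam (y - xstar)
    have hexp : (⟪-g - α • Lmap n q a lam, w⟫ : ℝ)
        = -⟪g, w⟫ - α * ⟪Lmap n q a lam, w⟫ := by
      rw [inner_sub_left, inner_neg_left, real_inner_smul_left]
    rw [hexp, hL0, mul_zero, sub_zero] at huv
    have hgw : (0:ℝ) ≤ ⟪g, w⟫ := by linarith
    have hsub := hg (oneTensor n q y)
    have hbF : bigF n q f (oneTensor n q xstar) = ∑ i, f i xstar := rfl
    have hbFy : bigF n q f (oneTensor n q y) = ∑ i, f i y := rfl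
    rw [hbF, hbFy] at hsub
    have : (⟪g, oneTensor n q y - oneTensor n q xstar⟫ : ℝ) = ⟪g, w⟫ := rfl
    rw [this] at hsub
    linarith

end
end

section
/- Let L_n ∈ ℝ^{n×n} be a symmetric positive semidefinite matrix whose largest eigenvalue λ_max(L_n) is positive, let α > 0, and let k satisfy 0 < k < 1/(α λ_max(L_n)). Then there exists a symmetric positive definite matrix Q_n ∈ ℝ^{n×n} such that α L_n − k α² L_n² = L_n Q_n L_n. -/
open Matrix

noncomputable section

lemma aux_posdef_conj {n : ℕ} {A : Matrix (Fin n) (Fin n) ℝ} (hA : A.PosDef)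
    {B : Matrix (Fin n) (Fin n) ℝ} (hB : IsUnit B) : (B * A * Bᴴ).PosDef := by
  rw [Matrix.posDef_iff_dotProduct_mulVec] at hA ⊢
  constructor
  · simpa only [conjTranspose_conjTranspose] using isHermitian_conjTranspose_mul_mul Bᴴ hA.1
  · intro x hx
    have hBH : IsUnit Bᴴ := by
      rw [Matrix.isUnit_iff_isUnit_det] at hB ⊢
      rw [Matrix.det_conjTranspose]
      simpa using hB
    have hx' : Bᴴ *ᵥ x ≠ 0 := by
      intro h
      exact hx <| (Matrix.mulVec_injective_iff_isUnit.2 hBH) (by simpa using h)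
    have := hA.2 hx'
    simpa only [star_mulVec, dotProduct_mulVec, vecMul_vecMul,
      conjTranspose_conjTranspose] using this

/-- for a symmetric PSD matrix `Lₙ` with positive largest eigenvalue `μ`,
`α > 0` and `0 < k < 1/(αμ)`, there is a symmetric positive definite `Qₙ` with
`αLₙ − kα²Lₙ² = Lₙ Qₙ Lₙ`. -/
theorem stmt4 (n : ℕ) (Ln : Matrix (Fin n) (Fin n) ℝ)
    (hsymm : Ln.IsSymm) (hpsd : Ln.PosSemidef)
    (μ : ℝ) (hμpos : 0 < μ)
    (hμeig : ∃ v : Fin n → ℝ, v ≠ 0 ∧ Ln.mulVec v = μ • v)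
    (hμmax : ∀ μ' : ℝ, (∃ v : Fin n → ℝ, v ≠ 0 ∧ Ln.mulVec v = μ' • v) → μ' ≤ μ)
    (α k : ℝ) (hα : 0 < α) (hk0 : 0 < k) (hk1 : k < 1 / (α * μ)) :
    ∃ Q : Matrix (Fin n) (Fin n) ℝ, Q.IsSymm ∧ Q.PosDef ∧
      α • Ln - (k * α ^ 2) • (Ln * Ln) = Ln * Q * Ln := by
  have hH : Ln.IsHermitian := hpsd.1
  set ev : Fin n → ℝ := hH.eigenvalues with hev
  set U : Matrix (Fin n) (Fin n) ℝ := (hH.eigenvectorUnitary : Matrix (Fin n) (Fin n) ℝ)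
    with hU
  set S : Matrix (Fin n) (Fin n) ℝ := star U with hS
  have hSU : S * U = 1 := by
    simpa [hS, hU] using (unitary.star_mul_self (hH.eigenvectorUnitary))
  have hUunit : IsUnit U := ⟨Unitary.toUnits (hH.eigenvectorUnitary), rfl⟩
  have hLn : Ln = U * diagonal ev * S := by
    have := hH.spectral_theorem
    simpa [RCLike.ofReal_real_eq_id] using this
  -- eigenvalue bounds
  have hev0 : ∀ i, 0 ≤ ev i := fun i => hpsd.eigenvalues_nonneg i
  have hevμ : ∀ i, ev i ≤ μ := by
    intro i
    refine hμmax _ ⟨hH.eigenvectorBasis i, ?_, hH.mulVec_eigenvectorBasis i⟩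
    intro h
    have hne := hH.eigenvectorBasis.toBasis.ne_zero i
    apply hne
    simp only [OrthonormalBasis.coe_toBasis]
    exact WithLp.ofLp_injective _ (funext fun j => congrFun h j)
  -- the diagonal entries of Q
  set f : Fin n → ℝ := fun i => if ev i = 0 then 1 else α / ev i - k * α ^ 2 with hf
  have hfpos : ∀ i, 0 < f i := by
    intro i
    by_cases h : ev i = 0
    · simp [hf, h]
    · have hl : 0 < ev i := lt_of_le_of_ne (hev0 i) (Ne.symm h)
      simp only [hf, h, if_false]
      have h1 : k * α ^ 2 < α / μ := by
        have := (mul_lt_mul_of_pos_right hk1 (by positivity : (0:ℝ) < α ^ 2))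
        calc k * α ^ 2 < 1 / (α * μ) * α ^ 2 := this
          _ = α / μ := by field_simp
      have h2 : α / μ ≤ α / ev i := by
        apply div_le_div_of_nonneg_left hα.le hl (hevμ i)
      linarith
  refine ⟨U * diagonal f * S, ?_, ?_, ?_⟩
  · -- symmetric
    have hherm : (U * diagonal f * S).IsHermitian := by
      have := (aux_posdef_conj (Matrix.PosDef.diagonal hfpos) hUunit).1
      simpa [hS, Matrix.star_eq_conjTranspose] using this
    rw [Matrix.IsSymm]
    have : (U * diagonal f * S)ᴴ = (U * diagonal f * S)ᵀ := by
      ext i j; simp [conjTranspose_apply]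
    rw [← this]; exact hherm
  · have := aux_posdef_conj (Matrix.PosDef.diagonal hfpos) hUunit
    simpa [hS, Matrix.star_eq_conjTranspose] using this
  · have hmul : ∀ X Y : Matrix (Fin n) (Fin n) ℝ,
        (U * X * S) * (U * Y * S) = U * (X * Y) * S := by
      intro X Y
      simp only [Matrix.mul_assoc]
      rw [show S * (U * (Y * S)) = Y * S by rw [← Matrix.mul_assoc, hSU, Matrix.one_mul]]
    have key : diagonal ev * diagonal f * diagonal ev
        = α • diagonal ev - (k * α ^ 2) • (diagonal ev * diagonal ev) := by
      ext i j
      rcases eq_or_ne i j with rfl | hij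
      · simp only [diagonal_mul_diagonal, Matrix.sub_apply, Matrix.smul_apply,
          diagonal_apply_eq, smul_eq_mul]
        by_cases h : ev i = 0
        · simp [h, hf]
        · simp only [hf, h, if_false]
          field_simp
      · simp [diagonal_apply_ne _ hij, Matrix.sub_apply, Matrix.smul_apply]
    calc α • Ln - (k * α ^ 2) • (Ln * Ln)
        = U * (α • diagonal ev - (k * α ^ 2) • (diagonal ev * diagonal ev)) * S := by
          rw [hLn, hmul]
          simp only [Matrix.mul_sub, Matrix.sub_mul, Matrix.mul_smul, Matrix.smul_mul]
      _ = U * (diagonal ev * diagonal f * diagonal ev) * S := by rw [key]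
      _ = Ln * (U * diagonal f * S) * Ln := by
          rw [hLn, hmul, hmul]

end
end

section
/- Let (x(·), λ(·)) be a trajectory of the algorithm and let (x*, λ*) satisfy the optimality conditions. Then for almost every t ≥ 0, the real function t ↦ V₁*(x(t), λ(t)) is differentiable at t and its derivative satisfies d/dt V₁*(x(t), λ(t)) ≤ −α ⟨x(t), L x(t)⟩ ≤ 0. -/
open Matrix MeasureTheory Filter

noncomputable section

variable {E : Type*} [NormedAddCommGroup E] [InnerProductSpace ℝ E]

/-- `V₁*(𝐱, λ) = ½‖𝐱 − x*‖² + ½‖λ − λ*‖²`. -/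
def V1aux (xs lams u v : E) : ℝ :=
  (1/2) * ‖u - xs‖^2 + (1/2) * ‖v - lams‖^2

/-- `V₂*(𝐱, λ) = 𝐟(𝐱) − 𝐟(x*) + (α/2)⟨𝐱, L𝐱⟩ + α⟨𝐱, Lλ⟩`. -/
def V2aux (n q : ℕ) (α : ℝ) (a : Fin n → Fin n → ℝ)
    (f : Fin n → EuclideanSpace ℝ (Fin q) → ℝ)
    (xs u v : EuclideanSpace ℝ (Fin n × Fin q)) : ℝ :=
  bigF n q f u - bigF n q f xs + (α/2) * (inner ℝ u (Lmap n q a u) : ℝ) +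
    α * (inner ℝ u (Lmap n q a v) : ℝ)

/- ### Auxiliary lemmas -/

lemma lmap_apply (n q : ℕ) (a : Fin n → Fin n → ℝ) (u : EuclideanSpace ℝ (Fin n × Fin q))
    (p : Fin n × Fin q) : Lmap n q a u p = ∑ k, lap n a p.1 k * u (k, p.2) := by
  have : Lmap n q a u p = ∑ p' : Fin n × Fin q, bigL n q a p p' * u p' := by
    simp [Lmap, Matrix.toEuclideanLin_apply, Matrix.mulVec, dotProduct]
  rw [this, Fintype.sum_prod_type]
  refine Finset.sum_congr rfl fun k _ => ?_
  simp [bigL, Matrix.kroneckerMap, Matrix.one_apply, mul_ite, mul_assoc]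

lemma inner_lmap (n q : ℕ) (a : Fin n → Fin n → ℝ) (u v : EuclideanSpace ℝ (Fin n × Fin q)) :
    (inner ℝ v (Lmap n q a u) : ℝ)
      = ∑ j, ∑ i, ∑ k, lap n a i k * (v (i, j) * u (k, j)) := by
  rw [Finset.sum_comm]
  simp only [PiLp.inner_apply, RCLike.inner_apply, starRingEnd_apply, star_trivial,
    lmap_apply, Fintype.sum_prod_type, Finset.mul_sum, Finset.sum_mul]
  exact Finset.sum_congr rfl fun i _ => Finset.sum_congr rfl fun j _ =>
    Finset.sum_congr rfl fun k _ => by ring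

lemma lap_symm (n : ℕ) (a : Fin n → Fin n → ℝ) (hsymm : ∀ i j, a i j = a j i)
    (i k : Fin n) : lap n a i k = lap n a k i := by
  rcases eq_or_ne i k with rfl | h
  · rfl
  · simp [lap, h, h.symm, hsymm i k]

lemma lmap_symm (n q : ℕ) (a : Fin n → Fin n → ℝ) (hsymm : ∀ i j, a i j = a j i)
    (u v : EuclideanSpace ℝ (Fin n × Fin q)) :
    (inner ℝ v (Lmap n q a u) : ℝ) = (inner ℝ u (Lmap n q a v) : ℝ) := by
  rw [inner_lmap, inner_lmap]
  refine Finset.sum_congr rfl fun j _ => ?_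
  rw [Finset.sum_comm]
  exact Finset.sum_congr rfl fun i _ => Finset.sum_congr rfl fun k _ => by
    rw [lap_symm n a hsymm k i]; ring

lemma lap_qform_nonneg (n : ℕ) (a : Fin n → Fin n → ℝ) (hsymm : ∀ i j, a i j = a j i)
    (hnn : ∀ i j, 0 ≤ a i j) (hdiag : ∀ i, a i i = 0) (y : Fin n → ℝ) :
    0 ≤ ∑ i, ∑ k, lap n a i k * (y i * y k) := by
  have h1 : ∀ i, ∑ k, lap n a i k * (y i * y k)
      = ∑ k, (a i k * (y i * y i) - a i k * (y i * y k)) := by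
    intro i
    rw [← Finset.add_sum_erase Finset.univ _ (Finset.mem_univ i),
      ← Finset.add_sum_erase Finset.univ
        (fun k => a i k * (y i * y i) - a i k * (y i * y k)) (Finset.mem_univ i)]
    have hlii : lap n a i i = ∑ k ∈ Finset.univ.erase i, a i k := by simp [lap]
    rw [hlii, hdiag i, Finset.sum_mul]
    rw [← Finset.sum_add_distrib]
    simp only [zero_mul, sub_zero, zero_add, zero_sub]
    refine Finset.sum_congr rfl fun k hk => ?_
    have hne : i ≠ k := fun h => (Finset.mem_erase.mp hk).1 h.symm
    have : lap n a i k = - a i k := by simp [lap, hne]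
    rw [this]; ring
  have hA : ∑ i, ∑ k, a i k * (y i * y i) = ∑ i, ∑ k, a i k * (y k * y k) := by
    rw [Finset.sum_comm]
    exact Finset.sum_congr rfl fun i _ => Finset.sum_congr rfl fun k _ => by
      rw [hsymm i k]
  have hkey : (2:ℝ) * ∑ i, ∑ k, lap n a i k * (y i * y k)
      = ∑ i, ∑ k, a i k * (y i - y k)^2 := by
    simp only [h1]
    rw [two_mul]
    nth_rewrite 2 [show (∑ i, ∑ k, (a i k * (y i * y i) - a i k * (y i * y k)))
      = ∑ i, ∑ k, (a i k * (y k * y k) - a i k * (y i * y k)) from ?_]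
    · rw [← Finset.sum_add_distrib]
      refine Finset.sum_congr rfl fun i _ => ?_
      rw [← Finset.sum_add_distrib]
      exact Finset.sum_congr rfl fun k _ => by ring
    · simp only [Finset.sum_sub_distrib]
      rw [hA]
  have hpos : 0 ≤ ∑ i, ∑ k, a i k * (y i - y k)^2 :=
    Finset.sum_nonneg fun i _ => Finset.sum_nonneg fun k _ =>
      mul_nonneg (hnn i k) (sq_nonneg _)
  linarith [hkey]

lemma lmap_psd (n q : ℕ) (a : Fin n → Fin n → ℝ) (hsymm : ∀ i j, a i j = a j i)
    (hnn : ∀ i j, 0 ≤ a i j) (hdiag : ∀ i, a i i = 0)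
    (u : EuclideanSpace ℝ (Fin n × Fin q)) :
    0 ≤ (inner ℝ u (Lmap n q a u) : ℝ) := by
  rw [inner_lmap]
  exact Finset.sum_nonneg fun j _ =>
    lap_qform_nonneg n a hsymm hnn hdiag (fun i => u (i, j))

lemma tangentCone_convex {K : Set E} (hK : Convex ℝ K) {x : E} (hx : x ∈ K) :
    Convex ℝ (tangentCone K x) := by
  refine Convex.closure ?_
  rintro d1 ⟨t1, ht1, hd1⟩ d2 ⟨t2, ht2, hd2⟩ θ1 θ2 hθ1 hθ2 hθ
  have hshrink : ∀ (d : E) (s t : ℝ), 0 < s → s ≤ t → x + t • d ∈ K → x + s • d ∈ K := by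
    intro d s t hs hst hmem
    have ht : 0 < t := lt_of_lt_of_le hs hst
    have h1 : (1 - s/t) • x + (s/t) • (x + t • d) = x + s • d := by
      rw [smul_add, smul_smul, div_mul_cancel₀ _ ht.ne', sub_smul, one_smul]
      abel
    rw [← h1]
    have h2 : s/t ≤ 1 := div_le_one_of_le₀ hst ht.le
    exact hK hx hmem (by linarith) (by positivity) (by ring)
  set t := min t1 t2 with htdef
  have ht : 0 < t := lt_min ht1 ht2
  have h1 : x + t • d1 ∈ K := hshrink d1 t t1 ht (min_le_left _ _) hd1
  have h2 : x + t • d2 ∈ K := hshrink d2 t t2 ht (min_le_right _ _) hd2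
  have hcomb : θ1 • (x + t • d1) + θ2 • (x + t • d2) = x + t • (θ1 • d1 + θ2 • d2) := by
    have h : θ2 = 1 - θ1 := by linarith
    subst h
    module
  have hmem : θ1 • d1 + θ2 • d2 ∈ {d | ∃ t : ℝ, 0 < t ∧ x + t • d ∈ K} :=
    ⟨t, ht, by rw [← hcomb]; exact hK h1 h2 hθ1 hθ2 hθ⟩
  exact hmem

lemma tangentCone_mem_sub {K : Set E} {x y : E} (hy : y ∈ K) :
    y - x ∈ tangentCone K x :=
  subset_closure ⟨1, one_pos, by simpa using hy⟩

lemma tangentCone_smul2 {K : Set E} {x p : E} (hp : p ∈ tangentCone K x) :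
    (2:ℝ) • p ∈ tangentCone K x := by
  refine map_mem_closure (continuous_const_smul (2:ℝ)) hp ?_
  rintro d ⟨t, ht, hd⟩
  exact ⟨t/2, by positivity, by rwa [smul_smul, div_mul_cancel₀ t two_ne_zero]⟩

lemma isProjOn_inner_le {K : Set E} (hK : Convex ℝ K) {u p : E}
    (h : IsProjOn K u p) : ∀ w ∈ K, (inner ℝ (u - p) (w - p) : ℝ) ≤ 0 := by
  obtain ⟨hp, hmin⟩ := h
  haveI : Nonempty K := ⟨⟨p, hp⟩⟩
  have heq : ‖u - p‖ = ⨅ w : K, ‖u - w‖ := by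
    refine le_antisymm (le_ciInf fun w => hmin w w.2) ?_
    have hbdd : BddBelow (Set.range fun w : K => ‖u - (w:E)‖) :=
      ⟨0, by rintro y ⟨w, rfl⟩; positivity⟩
    exact ciInf_le hbdd ⟨p, hp⟩
  exact (norm_eq_iInf_iff_real_inner_le_zero hK hp).mp heq

lemma prodSet_convex (n q : ℕ) (Ω : Fin n → Set (EuclideanSpace ℝ (Fin q)))
    (hΩcv : ∀ i, Convex ℝ (Ω i)) : Convex ℝ (prodSet n q Ω) := by
  intro u hu v hv θ1 θ2 hθ1 hθ2 hθ i
  have hblk : blk (θ1 • u + θ2 • v) i = θ1 • blk u i + θ2 • blk v i := rfl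
  rw [hblk]
  exact hΩcv i (hu i) (hv i) hθ1 hθ2 hθ

/-- along a trajectory, d/dt V₁*(x(t), λ(t)) ≤ −α⟨x(t), Lx(t)⟩ ≤ 0 a.e. -/
theorem stmt5
    (n q : ℕ) (hn : 2 ≤ n) (hq : 1 ≤ q) (α : ℝ) (hα : 0 < α)
    (a : Fin n → Fin n → ℝ)
    (hsymm : ∀ i j, a i j = a j i) (hnn : ∀ i j, 0 ≤ a i j) (hdiag : ∀ i, a i i = 0)
    (hconn : (SimpleGraph.fromRel fun i j => 0 < a i j).Connected)
    (f : Fin n → EuclideanSpace ℝ (Fin q) → ℝ)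
    (hfconv : ∀ i, ConvexOn ℝ Set.univ (f i)) (hfcont : ∀ i, Continuous (f i))
    (Ω : Fin n → Set (EuclideanSpace ℝ (Fin q)))
    (hΩne : ∀ i, (Ω i).Nonempty) (hΩcl : ∀ i, IsClosed (Ω i)) (hΩcv : ∀ i, Convex ℝ (Ω i))
    (hint : (⋂ i, interior (Ω i)).Nonempty)
    (x lam : ℝ → EuclideanSpace ℝ (Fin n × Fin q))
    (hxac : LocAC x) (hlamac : LocAC lam)
    (hxΩ : ∀ t : ℝ, 0 ≤ t → x t ∈ prodSet n q Ω)
    (hdyn : ∀ᵐ t ∂(volume.restrict (Set.Ici (0:ℝ))),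
      (∃ g ∈ subdiff (bigF n q f) (x t),
        IsProjOn (tangentCone (prodSet n q Ω) (x t))
          (-(α • Lmap n q a (x t)) - α • Lmap n q a (lam t) - g) (deriv x t)) ∧
      deriv lam t = α • Lmap n q a (x t))
    (xs lams : EuclideanSpace ℝ (Fin n × Fin q))
    (hxsΩ : xs ∈ prodSet n q Ω) (hLxs : Lmap n q a xs = 0)
    (hopt : ∃ gs ∈ subdiff (bigF n q f) xs,
      -gs - α • Lmap n q a lams ∈ normalCone (prodSet n q Ω) xs)
    :
    ∀ᵐ t ∂(volume.restrict (Set.Ici (0:ℝ))),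
      DifferentiableAt ℝ (fun τ => V1aux xs lams (x τ) (lam τ)) t ∧
      deriv (fun τ => V1aux xs lams (x τ) (lam τ)) t ≤
        -(α * (inner ℝ (x t) (Lmap n q a (x t)) : ℝ)) ∧
      -(α * (inner ℝ (x t) (Lmap n q a (x t)) : ℝ)) ≤ 0 := by
  obtain ⟨gs, hgs, hnc⟩ := hopt
  have hΩconv : Convex ℝ (prodSet n q Ω) := prodSet_convex n q Ω hΩcv
  filter_upwards [hdyn, hxac.1, hlamac.1, ae_restrict_mem measurableSet_Ici]
    with t hdyn_t hxd hld htI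
  obtain ⟨⟨g, hg, hproj⟩, hlder⟩ := hdyn_t
  have hXΩ : x t ∈ prodSet n q Ω := hxΩ t htI
  set L : EuclideanSpace ℝ (Fin n × Fin q) →ₗ[ℝ] EuclideanSpace ℝ (Fin n × Fin q) :=
    Lmap n q a with hLdef
  -- derivative of V1
  have hx' : HasDerivAt x (deriv x t) t := hxd.hasDerivAt
  have hl' : HasDerivAt lam (deriv lam t) t := hld.hasDerivAt
  have hVfun : (fun τ => V1aux xs lams (x τ) (lam τ))
      = fun τ => (1/2) * (inner ℝ (x τ - xs) (x τ - xs) : ℝ)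
        + (1/2) * (inner ℝ (lam τ - lams) (lam τ - lams) : ℝ) := by
    funext τ
    simp only [V1aux]
    rw [← real_inner_self_eq_norm_sq, ← real_inner_self_eq_norm_sq]
  have hA : HasDerivAt (fun τ => (inner ℝ (x τ - xs) (x τ - xs) : ℝ))
      ((inner ℝ (x t - xs) (deriv x t) : ℝ) + (inner ℝ (deriv x t) (x t - xs) : ℝ)) t :=
    (hx'.sub_const xs).inner ℝ (hx'.sub_const xs)
  have hB : HasDerivAt (fun τ => (inner ℝ (lam τ - lams) (lam τ - lams) : ℝ))
      ((inner ℝ (lam t - lams) (deriv lam t) : ℝ) + (inner ℝ (deriv lam t) (lam t - lams) : ℝ)) t :=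
    (hl'.sub_const lams).inner ℝ (hl'.sub_const lams)
  have hV : HasDerivAt (fun τ => V1aux xs lams (x τ) (lam τ))
      ((inner ℝ (x t - xs) (deriv x t) : ℝ) + (inner ℝ (lam t - lams) (deriv lam t) : ℝ)) t := by
    rw [hVfun]
    have := (hA.const_mul (1/2 : ℝ)).add (hB.const_mul (1/2 : ℝ))
    refine this.congr_deriv ?_
    rw [real_inner_comm (deriv x t) (x t - xs), real_inner_comm (deriv lam t) (lam t - lams)]
    ring
  refine ⟨hV.differentiableAt, ?_, ?_⟩
  · rw [hV.deriv]
    -- scalar abbreviations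
    set A : ℝ := inner ℝ (x t) (L (x t)) with hAdef
    set B : ℝ := inner ℝ (x t) (L (lam t)) with hBdef
    set C : ℝ := inner ℝ (x t) (L lams) with hCdef
    have hinner_xs : ∀ v : EuclideanSpace ℝ (Fin n × Fin q),
        (inner ℝ xs (L v) : ℝ) = 0 := by
      intro v
      rw [hLdef, lmap_symm n q a hsymm, hLxs]
      simp
    -- variational inequality for projection
    set u₀ : EuclideanSpace ℝ (Fin n × Fin q) :=
      -(α • L (x t)) - α • L (lam t) - g with hu₀def
    set P : EuclideanSpace ℝ (Fin n × Fin q) := deriv x t with hPdef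
    have hT : Convex ℝ (tangentCone (prodSet n q Ω) (x t)) := tangentCone_convex hΩconv hXΩ
    have hVI := isProjOn_inner_le hT hproj
    have hw2 : (inner ℝ (u₀ - P) P : ℝ) ≤ 0 := by
      have := hVI ((2:ℝ) • P) (tangentCone_smul2 hproj.1)
      have h2 : (2:ℝ) • P - P = P := by
        rw [two_smul]; abel
      rwa [h2] at this
    have hw1 : (inner ℝ (u₀ - P) (xs - x t) : ℝ) ≤ 0 := by
      have h := hVI (xs - x t) (tangentCone_mem_sub hxsΩ)
      have hsplit : (inner ℝ (u₀ - P) (xs - x t) : ℝ)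
          = (inner ℝ (u₀ - P) (xs - x t - P) : ℝ) + (inner ℝ (u₀ - P) P : ℝ) := by
        rw [← inner_add_right]
        congr 1
        abel
      rw [hsplit]
      linarith
    -- hence ⟪x − xs, P⟫ ≤ ⟪x − xs, u₀⟫
    have hineq1 : (inner ℝ (x t - xs) P : ℝ) ≤ (inner ℝ (x t - xs) u₀ : ℝ) := by
      have h1 : (inner ℝ (u₀ - P) (xs - x t) : ℝ)
          = -(inner ℝ (x t - xs) u₀ : ℝ) + (inner ℝ (x t - xs) P : ℝ) := by
        rw [inner_sub_left]
        rw [show xs - x t = -(x t - xs) by abel]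
        rw [inner_neg_right, inner_neg_right, real_inner_comm u₀, real_inner_comm P]
        ring
      linarith [hw1, h1.symm.le]
    -- expand ⟪x − xs, u₀⟫
    have hG : (inner ℝ (x t - xs) u₀ : ℝ)
        = -(α * A) - α * B - (inner ℝ g (x t - xs) : ℝ) := by
      have hexp : (inner ℝ (x t - xs) u₀ : ℝ)
          = -(α * (inner ℝ (x t - xs) (L (x t)) : ℝ))
            - α * (inner ℝ (x t - xs) (L (lam t)) : ℝ)
            - (inner ℝ (x t - xs) g : ℝ) := by
        rw [hu₀def]
        rw [inner_sub_right, inner_sub_right, inner_neg_right, inner_smul_right,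
          inner_smul_right]
      have e1 : (inner ℝ (x t - xs) (L (x t)) : ℝ) = A := by
        rw [inner_sub_left, hinner_xs, hAdef]; ring
      have e2 : (inner ℝ (x t - xs) (L (lam t)) : ℝ) = B := by
        rw [inner_sub_left, hinner_xs, hBdef]; ring
      have e3 : (inner ℝ (x t - xs) g : ℝ) = (inner ℝ g (x t - xs) : ℝ) := real_inner_comm _ _
      rw [hexp, e1, e2, e3]
    -- subgradient monotonicity
    have hmono : (inner ℝ gs (x t - xs) : ℝ) ≤ (inner ℝ g (x t - xs) : ℝ) := by
      have h1 := hg xs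
      have h2 := hgs (x t)
      have h3 : (inner ℝ g (xs - x t) : ℝ) = -(inner ℝ g (x t - xs) : ℝ) := by
        rw [show xs - x t = -(x t - xs) by abel, inner_neg_right]
      rw [h3] at h1
      linarith
    -- normal cone inequality
    have hncx : -(inner ℝ gs (x t - xs) : ℝ) - α * C ≤ 0 := by
      have h := hnc (x t) hXΩ
      have hexp : (inner ℝ (-gs - α • L lams) (x t - xs) : ℝ)
          = -(inner ℝ gs (x t - xs) : ℝ) - α * (inner ℝ (L lams) (x t - xs) : ℝ) := by
        rw [inner_sub_left, inner_neg_left, inner_smul_left]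
        simp
      have hC2 : (inner ℝ (L lams) (x t - xs) : ℝ) = C := by
        rw [real_inner_comm, inner_sub_left, hinner_xs, hCdef]; ring
      rw [hexp, hC2] at h
      exact h
    -- lambda term
    have hlam_term : (inner ℝ (lam t - lams) (deriv lam t) : ℝ) = α * B - α * C := by
      rw [hlder]
      rw [inner_smul_right, inner_sub_left]
      have e4 : (inner ℝ (lam t) (L (x t)) : ℝ) = B := by
        rw [hLdef, lmap_symm n q a hsymm]
      have e5 : (inner ℝ lams (L (x t)) : ℝ) = C := by
        rw [hLdef, lmap_symm n q a hsymm]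
      rw [e4, e5]; ring
    rw [hlam_term]
    have : (inner ℝ (x t - xs) P : ℝ) ≤ -(α * A) - α * B
        - (inner ℝ gs (x t - xs) : ℝ) := by
      have := hineq1.trans_eq hG
      linarith [hmono]
    linarith [hncx]
  · have hpsd : 0 ≤ (inner ℝ (x t) (Lmap n q a (x t)) : ℝ) :=
      lmap_psd n q a hsymm hnn hdiag (x t)
    nlinarith

end
end

section
/- Let (x*, λ*) satisfy the optimality conditions and let k satisfy 0 < k < 1/(α λ_max(L_n)), where λ_max(L_n) is the largest eigenvalue of L_n. Then the function V*(𝐱, λ) = V₁*(𝐱, λ) + k V₂*(𝐱, λ) is nonnegative for all 𝐱 ∈ Ω and all λ ∈ ℝ^{nq}. -/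
open Matrix MeasureTheory Filter

noncomputable section

variable {E : Type*} [NormedAddCommGroup E] [InnerProductSpace ℝ E]

lemma rayleigh_bound {n : ℕ} (A : Matrix (Fin n) (Fin n) ℝ) (hA : A.IsHermitian) (μ : ℝ)
    (hμ : ∀ μ' : ℝ, (∃ v : Fin n → ℝ, v ≠ 0 ∧ A.mulVec v = μ' • v) → μ' ≤ μ)
    (v : EuclideanSpace ℝ (Fin n)) :
    (inner ℝ v (Matrix.toEuclideanLin A v) : ℝ) ≤ μ * ‖v‖ ^ 2 := by
  classical
  set b := hA.eigenvectorBasis with hb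
  have heig : ∀ i, hA.eigenvalues i ≤ μ := by
    intro i
    refine hμ _ ⟨b i, ?_, hA.mulVec_eigenvectorBasis i⟩
    intro h
    exact hA.eigenvectorBasis.orthonormal.ne_zero i (by ext j; exact congrFun h j)
  set T := Matrix.toEuclideanLin A with hT
  have hTb : ∀ i, T (b i) = hA.eigenvalues i • b i := by
    intro i
    ext j
    exact congrFun (hA.mulVec_eigenvectorBasis i) j
  have hv : v = ∑ i, b.repr v i • b i := (b.sum_repr v).symm
  have hTv : T v = ∑ i, (hA.eigenvalues i * b.repr v i) • b i := by
    conv_lhs => rw [hv]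
    rw [map_sum]
    refine Finset.sum_congr rfl fun i _ => ?_
    rw [LinearMap.map_smul, hTb i, smul_smul, mul_comm]
  have hrep : ∀ i, (inner ℝ v (b i) : ℝ) = b.repr v i := by
    intro i
    rw [real_inner_comm, ← b.repr_apply_apply]
  have hinner : (inner ℝ v (T v) : ℝ) = ∑ i, hA.eigenvalues i * (b.repr v i) ^ 2 := by
    rw [hTv, inner_sum]
    refine Finset.sum_congr rfl fun i _ => ?_
    rw [real_inner_smul_right, hrep i]
    ring
  have hnorm : ‖v‖ ^ 2 = ∑ i, (b.repr v i) ^ 2 := by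
    rw [← b.repr.norm_map v, EuclideanSpace.norm_eq, Real.sq_sqrt (by positivity)]
    simp [sq_abs]
  rw [hinner, hnorm, Finset.mul_sum]
  exact Finset.sum_le_sum fun i _ => mul_le_mul_of_nonneg_right (heig i) (sq_nonneg _)

def colv {n q : ℕ} (x : EuclideanSpace ℝ (Fin n × Fin q)) (j : Fin q) :
    EuclideanSpace ℝ (Fin n) := WithLp.toLp 2 (fun i => x (i, j))

section helpers
variable {n q : ℕ} {a : Fin n → Fin n → ℝ}

lemma lap_apply' (hdiag : ∀ i, a i i = 0) (i j : Fin n) :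
    lap n a i j = (if i = j then ∑ k, a i k else 0) - a i j := by
  rcases eq_or_ne i j with h | h
  · subst h
    simp [lap, hdiag, Finset.sum_erase Finset.univ (hdiag i)]
  · simp [lap, h]

lemma quad_eq (hdiag : ∀ i, a i i = 0) (v : Fin n → ℝ) :
    v ⬝ᵥ (lap n a).mulVec v =
      (∑ i, ∑ j, a i j * v i ^ 2) - ∑ i, ∑ j, a i j * (v i * v j) := by
  simp only [dotProduct, Matrix.mulVec, lap_apply' hdiag]
  rw [← Finset.sum_sub_distrib]
  refine Finset.sum_congr rfl fun i _ => ?_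
  simp only [dotProduct, sub_mul, ite_mul, zero_mul,
    Finset.sum_sub_distrib, Finset.sum_ite_eq, Finset.mem_univ, if_true]
  rw [mul_sub]
  congr 1
  · rw [Finset.sum_mul, Finset.mul_sum]
    exact Finset.sum_congr rfl fun k _ => by ring
  · rw [Finset.mul_sum]
    exact Finset.sum_congr rfl fun j _ => by ring

lemma quad_nonneg (hsymm : ∀ i j, a i j = a j i) (hnn : ∀ i j, 0 ≤ a i j)
    (hdiag : ∀ i, a i i = 0) (v : Fin n → ℝ) :
    0 ≤ v ⬝ᵥ (lap n a).mulVec v := by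
  have hswap : ∑ i, ∑ j, a i j * v j ^ 2 = ∑ i, ∑ j, a i j * v i ^ 2 := by
    rw [Finset.sum_comm]
    exact Finset.sum_congr rfl fun j _ => Finset.sum_congr rfl fun i _ => by rw [hsymm]
  have e1 : ∑ i, ∑ j, a i j * (v i - v j) ^ 2
      = (∑ i, ∑ j, a i j * v i ^ 2) + (∑ i, ∑ j, a i j * v j ^ 2)
        - 2 * ∑ i, ∑ j, a i j * (v i * v j) := by
    have hrow : ∀ i, ∑ j, a i j * (v i - v j) ^ 2
        = (∑ j, a i j * v i ^ 2) + (∑ j, a i j * v j ^ 2)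
          - 2 * ∑ j, a i j * (v i * v j) := by
      intro i
      rw [Finset.mul_sum, ← Finset.sum_add_distrib, ← Finset.sum_sub_distrib]
      exact Finset.sum_congr rfl fun j _ => by ring
    rw [Finset.sum_congr rfl fun i _ => hrow i, Finset.mul_sum,
      ← Finset.sum_add_distrib, ← Finset.sum_sub_distrib]
  have hq := quad_eq hdiag (a := a) v
  have hpos : 0 ≤ ∑ i, ∑ j, a i j * (v i - v j) ^ 2 :=
    Finset.sum_nonneg fun i _ => Finset.sum_nonneg fun j _ =>
      mul_nonneg (hnn i j) (sq_nonneg _)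
  linarith

lemma lap_symm_entries (hsymm : ∀ i j, a i j = a j i) (i j : Fin n) :
    lap n a i j = lap n a j i := by
  rcases eq_or_ne i j with h | h
  · rw [h]
  · simp [lap, h, h.symm, hsymm]

lemma lap_isHermitian (hsymm : ∀ i j, a i j = a j i) : (lap n a).IsHermitian := by
  ext i j
  simpa using lap_symm_entries hsymm j i

lemma dot_mulVec_symm (hsymm : ∀ i j, a i j = a j i) (u w : Fin n → ℝ) :
    u ⬝ᵥ (lap n a).mulVec w = w ⬝ᵥ (lap n a).mulVec u := by
  simp only [dotProduct, Matrix.mulVec, Finset.mul_sum]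
  rw [Finset.sum_comm]
  refine Finset.sum_congr rfl fun i _ => Finset.sum_congr rfl fun j _ => ?_
  rw [lap_symm_entries hsymm j i]; ring

lemma Lmap_apply_eq (x : EuclideanSpace ℝ (Fin n × Fin q)) (p : Fin n × Fin q) :
    Lmap n q a x p = ∑ i', lap n a p.1 i' * x (i', p.2) := by
  show ∑ p' : Fin n × Fin q, bigL n q a p p' * x p' = _
  rw [Fintype.sum_prod_type]
  refine Finset.sum_congr rfl fun i' _ => ?_
  simp [bigL, Matrix.kroneckerMap, Matrix.one_apply, mul_ite, ite_mul,
    Finset.sum_ite_eq', mul_comm]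

lemma inner_Lmap_eq (x y : EuclideanSpace ℝ (Fin n × Fin q)) :
    (inner ℝ x (Lmap n q a y) : ℝ) =
      ∑ j : Fin q, colv x j ⬝ᵥ (lap n a).mulVec (colv y j) := by
  rw [PiLp.inner_apply]
  simp only [RCLike.inner_apply, starRingEnd_apply, star_trivial]
  rw [Fintype.sum_prod_type, Finset.sum_comm]
  refine Finset.sum_congr rfl fun j _ => Finset.sum_congr rfl fun i _ => ?_
  rw [Lmap_apply_eq]
  exact mul_comm _ _

lemma euclid_norm_sq {ι : Type*} [Fintype ι] (y : EuclideanSpace ℝ ι) : ‖y‖ ^ 2 = ∑ i, y i ^ 2 := by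
  rw [EuclideanSpace.norm_eq, Real.sq_sqrt (by positivity)]
  simp [sq_abs]

lemma norm_sq_cols (x : EuclideanSpace ℝ (Fin n × Fin q)) :
    ‖x‖ ^ 2 = ∑ j : Fin q, ‖colv x j‖ ^ 2 := by
  rw [euclid_norm_sq]
  rw [Fintype.sum_prod_type, Finset.sum_comm]
  exact Finset.sum_congr rfl fun j _ => (euclid_norm_sq (colv x j)).symm

end helpers

section helpers2
variable {n q : ℕ} {a : Fin n → Fin n → ℝ}

lemma inner_Lmap_nonneg (hsymm : ∀ i j, a i j = a j i) (hnn : ∀ i j, 0 ≤ a i j)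
    (hdiag : ∀ i, a i i = 0) (x : EuclideanSpace ℝ (Fin n × Fin q)) :
    0 ≤ (inner ℝ x (Lmap n q a x) : ℝ) := by
  rw [inner_Lmap_eq]
  exact Finset.sum_nonneg fun j _ => quad_nonneg hsymm hnn hdiag _

lemma inner_Lmap_symm (hsymm : ∀ i j, a i j = a j i)
    (x y : EuclideanSpace ℝ (Fin n × Fin q)) :
    (inner ℝ x (Lmap n q a y) : ℝ) = inner ℝ y (Lmap n q a x) := by
  rw [inner_Lmap_eq, inner_Lmap_eq]
  exact Finset.sum_congr rfl fun j _ => dot_mulVec_symm hsymm _ _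

lemma dot_eq_inner (v : EuclideanSpace ℝ (Fin n)) (A : Matrix (Fin n) (Fin n) ℝ) :
    v ⬝ᵥ A.mulVec v = (inner ℝ v (Matrix.toEuclideanLin A v) : ℝ) := by
  rw [PiLp.inner_apply]
  simp only [RCLike.inner_apply, starRingEnd_apply, star_trivial]
  exact Finset.sum_congr rfl fun i _ => mul_comm _ _

lemma inner_Lmap_rayleigh (hsymm : ∀ i j, a i j = a j i) (μ : ℝ)
    (hμmax : ∀ μ' : ℝ, (∃ v : Fin n → ℝ, v ≠ 0 ∧ (lap n a).mulVec v = μ' • v) → μ' ≤ μ)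
    (x : EuclideanSpace ℝ (Fin n × Fin q)) :
    (inner ℝ x (Lmap n q a x) : ℝ) ≤ μ * ‖x‖ ^ 2 := by
  rw [inner_Lmap_eq, norm_sq_cols, Finset.mul_sum]
  refine Finset.sum_le_sum fun j _ => ?_
  rw [dot_eq_inner]
  exact rayleigh_bound _ (lap_isHermitian hsymm) μ hμmax (colv x j)

end helpers2

/-- V* = V₁* + k V₂* is nonnegative on Ω × ℝ^{nq}. -/
theorem stmt7
    (n q : ℕ) (hn : 2 ≤ n) (hq : 1 ≤ q) (α : ℝ) (hα : 0 < α)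
    (a : Fin n → Fin n → ℝ)
    (hsymm : ∀ i j, a i j = a j i) (hnn : ∀ i j, 0 ≤ a i j) (hdiag : ∀ i, a i i = 0)
    (hconn : (SimpleGraph.fromRel fun i j => 0 < a i j).Connected)
    (f : Fin n → EuclideanSpace ℝ (Fin q) → ℝ)
    (hfconv : ∀ i, ConvexOn ℝ Set.univ (f i)) (hfcont : ∀ i, Continuous (f i))
    (Ω : Fin n → Set (EuclideanSpace ℝ (Fin q)))
    (hΩne : ∀ i, (Ω i).Nonempty) (hΩcl : ∀ i, IsClosed (Ω i)) (hΩcv : ∀ i, Convex ℝ (Ω i))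
    (hint : (⋂ i, interior (Ω i)).Nonempty)
    (xs lams : EuclideanSpace ℝ (Fin n × Fin q))
    (hxsΩ : xs ∈ prodSet n q Ω) (hLxs : Lmap n q a xs = 0)
    (hopt : ∃ gs ∈ subdiff (bigF n q f) xs,
      -gs - α • Lmap n q a lams ∈ normalCone (prodSet n q Ω) xs)
    (μ : ℝ)
    (hμeig : ∃ v : Fin n → ℝ, v ≠ 0 ∧ (lap n a).mulVec v = μ • v)
    (hμmax : ∀ μ' : ℝ, (∃ v : Fin n → ℝ, v ≠ 0 ∧ (lap n a).mulVec v = μ' • v) → μ' ≤ μ)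
    (k : ℝ) (hk0 : 0 < k) (hk1 : k < 1 / (α * μ))
    :
    ∀ xv ∈ prodSet n q Ω, ∀ lamv : EuclideanSpace ℝ (Fin n × Fin q),
      0 ≤ V1aux xs lams xv lamv + k * V2aux n q α a f xs xv lamv := by
  intro xv hxvΩ lamv
  obtain ⟨gs, hgs, hnc⟩ := hopt
  set L := Lmap n q a with hLdef
  have hsym : ∀ x y : EuclideanSpace ℝ (Fin n × Fin q),
      (inner ℝ x (L y) : ℝ) = inner ℝ y (L x) := fun x y => inner_Lmap_symm hsymm x y
  have hpsd : ∀ x : EuclideanSpace ℝ (Fin n × Fin q), 0 ≤ (inner ℝ x (L x) : ℝ) :=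
    fun x => inner_Lmap_nonneg hsymm hnn hdiag x
  have hray : ∀ x : EuclideanSpace ℝ (Fin n × Fin q),
      (inner ℝ x (L x) : ℝ) ≤ μ * ‖x‖ ^ 2 := fun x => inner_Lmap_rayleigh hsymm μ hμmax x
  set u := xv - xs with hu
  set w := lamv - lams with hw
  have exv : xv = xs + u := by rw [hu, add_sub_cancel]
  have elamv : lamv = lams + w := by rw [hw, add_sub_cancel]
  have hLu0 : ∀ z : EuclideanSpace ℝ (Fin n × Fin q), (inner ℝ xs (L z) : ℝ) = 0 := by
    intro z
    rw [hsym, hLxs, inner_zero_right]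
  -- subgradient and normal cone inequalities
  have h2 : bigF n q f xs + (inner ℝ gs u : ℝ) ≤ bigF n q f xv := hgs xv
  have h1 : (inner ℝ (-gs - α • L lams) u : ℝ) ≤ 0 := hnc xv hxvΩ
  have h1' : -(α * (inner ℝ u (L lams) : ℝ)) ≤ (inner ℝ gs u : ℝ) := by
    rw [inner_sub_left, inner_neg_left, real_inner_smul_left, real_inner_comm u (L lams)] at h1
    linarith
  have hbigF : -(α * (inner ℝ u (L lams) : ℝ)) ≤ bigF n q f xv - bigF n q f xs := by
    linarith
  -- rewrite the quadratic terms
  have i1 : (inner ℝ xv (L xv) : ℝ) = inner ℝ u (L u) := by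
    conv_lhs => rw [exv]
    rw [map_add, inner_add_left, inner_add_right, inner_add_right, hLxs]
    rw [inner_zero_right, inner_zero_right, hLu0 u]
    ring
  have i2 : (inner ℝ xv (L lamv) : ℝ) = (inner ℝ u (L w) : ℝ) + inner ℝ u (L lams) := by
    conv_lhs => rw [exv, elamv]
    rw [map_add, inner_add_left, inner_add_right, inner_add_right, hLu0 lams, hLu0 w]
    ring
  have hV2 : (α/2) * (inner ℝ u (L u) : ℝ) + α * (inner ℝ u (L w) : ℝ)
      ≤ V2aux n q α a f xs xv lamv := by
    rw [V2aux, i1, i2]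
    nlinarith [hbigF]
  -- PSD cross term bound
  have hcross : 0 ≤ (inner ℝ u (L u) : ℝ) + 2 * (inner ℝ u (L w) : ℝ) + (inner ℝ w (L w) : ℝ) := by
    have h0 := hpsd (u + w)
    rw [map_add, inner_add_left, inner_add_right, inner_add_right] at h0
    rw [hsym w u] at h0
    linarith
  -- eigenvalue facts
  have hαμ : 0 < α * μ := by
    by_contra hcon
    push_neg at hcon
    have : 1 / (α * μ) ≤ 0 := one_div_nonpos.mpr hcon
    linarith
  have hk2 : k * (α * μ) < 1 := (lt_div_iff₀ hαμ).mp hk1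
  have hrayw : (inner ℝ w (L w) : ℝ) ≤ μ * ‖w‖ ^ 2 := hray w
  -- assemble
  rw [V1aux, ← hu, ← hw]
  have hkV2 : k * ((α/2) * (inner ℝ u (L u) : ℝ) + α * (inner ℝ u (L w) : ℝ))
      ≤ k * V2aux n q α a f xs xv lamv := mul_le_mul_of_nonneg_left hV2 hk0.le
  have p1 : k * α * (inner ℝ w (L w) : ℝ) ≤ k * α * (μ * ‖w‖ ^ 2) :=
    mul_le_mul_of_nonneg_left hrayw (mul_nonneg hk0.le hα.le)
  have p2 : k * (α * μ) * ‖w‖ ^ 2 ≤ 1 * ‖w‖ ^ 2 :=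
    mul_le_mul_of_nonneg_right hk2.le (sq_nonneg _)
  nlinarith [hkV2, p1, p2, mul_nonneg (mul_nonneg hk0.le hα.le) hcross,
    sq_nonneg ‖u‖, sq_nonneg ‖w‖]


end
end
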